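/- arXiv:2106.11121 — 7 statements merged into one kernel-verified Lean document; each statement's English description precedes it below -/
import Mathlib

section
/- Let G be a simple graph on n vertices with chromatic number χ(G), and let A be its adjacency matrix with eigenvalues λ₁ ≥ λ₂ ≥ ⋯ ≥ λₙ. If n ≥ m ≥ χ(G) ≥ 2, then λ₁ + λₙ + λₙ₋₁ + ⋯ + λₙ₋ₘ₊₂ ≤ 0. -/
/-- The `i`-th largest eigenvalue (0-indexed) of a real symmetric matrix; `0` if out of
range or not symmetric. -/
noncomputable def eigDesc {n : ℕ} (A : Matrix (Fin n) (Fin n) ℝ) : ℕ → ℝ :=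
  fun i => if h : i < n ∧ A.IsHermitian then
    h.2.eigenvalues (Tuple.sort (fun j => -h.2.eigenvalues j) ⟨i, h.1⟩) else 0

open Matrix Finset

lemma scalarKF {N : ℕ} (lam s : Fin N → ℝ) (h0 : ∀ i, 0 ≤ s i) (h1 : ∀ i, s i ≤ 1)
    (K : Finset (Fin N)) (hs : ∑ i, s i = (K.card : ℝ))
    (hth : ∀ i ∈ K, ∀ j ∉ K, lam i ≤ lam j) :
    ∑ i ∈ K, lam i ≤ ∑ i, lam i * s i := by
  rcases K.eq_empty_or_nonempty with rfl | hKne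
  · have hz : ∀ i ∈ Finset.univ, s i = 0 := by
      rw [← Finset.sum_eq_zero_iff_of_nonneg (fun i _ => h0 i)]
      simpa using hs
    simp only [Finset.sum_empty]
    rw [Finset.sum_congr rfl (fun i hi => by rw [hz i hi, mul_zero])]
    simp
  rcases eq_or_ne K Finset.univ with rfl | hKu
  · have hz : ∀ i ∈ Finset.univ, (1 : ℝ) - s i = 0 := by
      rw [← Finset.sum_eq_zero_iff_of_nonneg (fun i _ => by linarith [h1 i])]
      rw [Finset.sum_sub_distrib, hs]
      simp
    refine le_of_eq (Finset.sum_congr rfl fun i hi => ?_)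
    have := hz i hi
    have : s i = 1 := by linarith
    rw [this, mul_one]
  · obtain ⟨i₀, hi₀K, hi₀max⟩ := K.exists_max_image lam hKne
    set t := lam i₀ with ht
    have key : ∑ i ∈ K, t * (s i - 1) + ∑ i ∈ Kᶜ, t * s i ≤
        ∑ i ∈ K, lam i * (s i - 1) + ∑ i ∈ Kᶜ, lam i * s i := by
      refine add_le_add (Finset.sum_le_sum fun i hi => ?_) (Finset.sum_le_sum fun i hi => ?_)
      · exact mul_le_mul_of_nonpos_right (hi₀max i hi) (by linarith [h1 i])
      · exact mul_le_mul_of_nonneg_right (hth i₀ hi₀K i (by simpa using hi)) (h0 i)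
    have lhs0 : ∑ i ∈ K, t * (s i - 1) + ∑ i ∈ Kᶜ, t * s i = 0 := by
      rw [← Finset.mul_sum, ← Finset.mul_sum, ← mul_add, Finset.sum_sub_distrib]
      have : ∑ i ∈ K, s i + ∑ i ∈ Kᶜ, s i = ∑ i, s i := Finset.sum_add_sum_compl K s
      rw [Finset.sum_const, nsmul_eq_mul, mul_one]
      have : ∑ i ∈ K, s i - (K.card : ℝ) + ∑ i ∈ Kᶜ, s i = 0 := by
        rw [← hs, ← Finset.sum_add_sum_compl K s]; ring
      rw [this, mul_zero]
    have rhs : ∑ i ∈ K, lam i * (s i - 1) + ∑ i ∈ Kᶜ, lam i * s i =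
        ∑ i, lam i * s i - ∑ i ∈ K, lam i := by
      have := Finset.sum_add_sum_compl K (fun i => lam i * s i)
      rw [Finset.sum_congr rfl (fun i _ => by ring : ∀ i ∈ K, lam i * (s i - 1) = lam i * s i - lam i),
        Finset.sum_sub_distrib]
      linarith [this]
    linarith [key, lhs0, rhs.symm ▸ key]

lemma exists_weights {N k : ℕ} (A : Matrix (Fin N) (Fin N) ℝ) (hA : A.IsHermitian)
    (V : Matrix (Fin N) (Fin k) ℝ) (hV : Vᴴ * V = 1) :
    ∃ s : Fin N → ℝ, (∀ i, 0 ≤ s i) ∧ (∀ i, s i ≤ 1) ∧ (∑ i, s i = (k : ℝ)) ∧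
      (Vᴴ * A * V).trace = ∑ i, hA.eigenvalues i * s i := by
  set W : Matrix (Fin N) (Fin N) ℝ := (hA.eigenvectorUnitary : Matrix (Fin N) (Fin N) ℝ) with hW
  have hWW : star W * W = 1 := (Matrix.mem_unitaryGroup_iff').mp hA.eigenvectorUnitary.2
  have hWW' : W * star W = 1 := (Matrix.mem_unitaryGroup_iff).mp hA.eigenvectorUnitary.2
  set M : Matrix (Fin N) (Fin k) ℝ := star W * V with hM
  have hWWt : W * Wᴴ = 1 := by rw [← Matrix.star_eq_conjTranspose]; exact hWW'
  have hMH : Mᴴ = Vᴴ * W := by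
    rw [hM, conjTranspose_mul, star_eq_conjTranspose, conjTranspose_conjTranspose]
  have hMM : Mᴴ * M = 1 := by
    rw [hMH, hM, star_eq_conjTranspose, ← Matrix.mul_assoc, Matrix.mul_assoc Vᴴ W Wᴴ, hWWt,
      Matrix.mul_one, hV]
  set s : Fin N → ℝ := fun i => ∑ j, (M i j)^2 with hs
  have hs0 : ∀ i, 0 ≤ s i := fun i => Finset.sum_nonneg fun j _ => sq_nonneg _
  have hsum : ∑ i, s i = (k : ℝ) := by
    have h1 : ∑ i, s i = (Mᴴ * M).trace := by
      rw [Matrix.trace]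
      rw [Finset.sum_comm]
      refine Finset.sum_congr rfl fun i _ => ?_
      simp [Matrix.mul_apply, conjTranspose_apply, Matrix.diag, sq]
    rw [h1, hMM, Matrix.trace_one]
    simp
  have hs1 : ∀ i, s i ≤ 1 := by
    intro i
    set P : Matrix (Fin N) (Fin N) ℝ := M * Mᴴ with hP
    have hPP : P * P = P := by
      rw [hP, Matrix.mul_assoc, ← Matrix.mul_assoc Mᴴ M Mᴴ, hMM, Matrix.one_mul]
    have hPsym : Pᴴ = P := by
      rw [hP, conjTranspose_mul, conjTranspose_conjTranspose]
    have hPii : P i i = s i := by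
      simp [hP, Matrix.mul_apply, conjTranspose_apply, hs, sq]
    have hsq : P i i = ∑ j, (P i j)^2 := by
      conv_lhs => rw [← hPP]
      rw [Matrix.mul_apply]
      refine Finset.sum_congr rfl fun j _ => ?_
      have : P j i = P i j := by
        conv_lhs => rw [← hPsym]
        simp [conjTranspose_apply]
      rw [this, sq]
    have h2 := Finset.single_le_sum (f := fun j => (P i j)^2) (fun j _ => sq_nonneg _)
      (Finset.mem_univ i)
    rw [← hsq] at h2
    nlinarith [hs0 i, hPii]
  refine ⟨s, hs0, hs1, hsum, ?_⟩
  have hdiag : (RCLike.ofReal ∘ hA.eigenvalues : Fin N → ℝ) = hA.eigenvalues := rfl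
  have hspec : A = W * Matrix.diagonal hA.eigenvalues * star W := by
    have := hA.spectral_theorem
    rw [hdiag] at this
    exact this
  have hVAV : Vᴴ * A * V = Mᴴ * Matrix.diagonal hA.eigenvalues * M := by
    conv_lhs => rw [hspec]
    rw [hMH, hM]
    simp only [Matrix.mul_assoc]
  have hdd : ∀ j, (Mᴴ * Matrix.diagonal hA.eigenvalues * M) j j
      = ∑ i, hA.eigenvalues i * (M i j)^2 := by
    intro j
    rw [Matrix.mul_assoc, Matrix.mul_apply]
    refine Finset.sum_congr rfl fun i _ => ?_
    rw [Matrix.diagonal_mul, conjTranspose_apply]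
    simp [sq]; ring
  rw [hVAV, Matrix.trace]
  simp only [Matrix.diag]
  rw [Finset.sum_congr rfl fun j _ => hdd j, Finset.sum_comm]
  exact Finset.sum_congr rfl fun i _ => by rw [hs, Finset.mul_sum]

lemma exists_surj_coloring {n m : ℕ} (G : SimpleGraph (Fin n)) (hmn : m ≤ n)
    (hcol : G.Colorable m) :
    ∃ c : Fin n → Fin m, (∀ v w, G.Adj v w → c v ≠ c w) ∧ Function.Surjective c := by
  obtain ⟨C⟩ := hcol
  suffices H : ∀ (k : ℕ) (c : Fin n → Fin m), (∀ v w, G.Adj v w → c v ≠ c w) →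
      m - (Finset.image c Finset.univ).card ≤ k →
      ∃ c' : Fin n → Fin m, (∀ v w, G.Adj v w → c' v ≠ c' w) ∧ Function.Surjective c' by
    exact H m C (fun v w h => C.valid h) (Nat.sub_le _ _)
  intro k
  induction k with
  | zero =>
    intro c hc hk
    refine ⟨c, hc, ?_⟩
    have himg : Finset.image c Finset.univ = Finset.univ := by
      apply Finset.eq_univ_of_card
      have h1 : (Finset.image c Finset.univ).card ≤ m := by
        simpa using Finset.card_le_card (Finset.subset_univ (Finset.image c Finset.univ))
      have h2 : m ≤ (Finset.image c Finset.univ).card := Nat.le_of_sub_eq_zero (Nat.le_zero.mp hk)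
      simp [Fintype.card_fin]
      omega
    intro j
    have : j ∈ Finset.image c Finset.univ := himg ▸ Finset.mem_univ j
    obtain ⟨v, _, hv⟩ := Finset.mem_image.mp this
    exact ⟨v, hv⟩
  | succ k ih =>
    intro c hc hk
    by_cases hsurj : Function.Surjective c
    · exact ⟨c, hc, hsurj⟩
    · obtain ⟨j0, hj0⟩ : ∃ j0 : Fin m, ∀ v, c v ≠ j0 := by
        by_contra h
        push_neg at h
        exact hsurj fun j => by obtain ⟨v, hv⟩ := h j; exact ⟨v, hv⟩
      have hj0' : j0 ∉ Finset.image c Finset.univ := by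
        exact fun h => by obtain ⟨v, -, hv⟩ := Finset.mem_image.mp h; exact hj0 v hv
      have hcard : (Finset.image c Finset.univ).card < n := by
        have hne : Finset.image c Finset.univ ≠ Finset.univ := by
          intro h
          exact hj0' (by rw [h]; exact Finset.mem_univ j0)
        have h1 : (Finset.image c Finset.univ).card < m := by
          have := Finset.card_lt_card (Finset.ssubset_univ_iff.mpr hne)
          simpa [Fintype.card_fin] using this
        omega
      obtain ⟨v, -, w, -, hvw, hcvw⟩ := Finset.exists_ne_map_eq_of_card_lt_of_maps_to
        (by simpa [Fintype.card_fin] using hcard) (fun a (_ : a ∈ Finset.univ) =>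
          Finset.mem_image_of_mem c (Finset.mem_univ a))
      set c' := Function.update c v j0 with hc'
      have hc'v : c' v = j0 := Function.update_self v j0 c
      have hc'ne : ∀ a, a ≠ v → c' a = c a := fun a ha => Function.update_of_ne ha j0 c
      have hproper : ∀ a b, G.Adj a b → c' a ≠ c' b := by
        intro a b hadj
        by_cases hav : a = v <;> by_cases hbv : b = v
        · exact absurd (hav.trans hbv.symm) hadj.ne
        · rw [hav, hc'v, hc'ne b hbv]
          exact fun h => hj0 b h.symm
        · rw [hbv, hc'v, hc'ne a hav]
          exact hj0 a
        · rw [hc'ne a hav, hc'ne b hbv]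
          exact hc a b hadj
      have hsub : insert j0 (Finset.image c Finset.univ) ⊆ Finset.image c' Finset.univ := by
        intro u hu
        rcases Finset.mem_insert.mp hu with rfl | hu
        · exact Finset.mem_image.mpr ⟨v, Finset.mem_univ v, hc'v⟩
        · obtain ⟨a, -, ha⟩ := Finset.mem_image.mp hu
          by_cases hav : a = v
          · refine Finset.mem_image.mpr ⟨w, Finset.mem_univ w, ?_⟩
            rw [hc'ne w (fun h : w = v => hvw h.symm)]
            · rw [← hcvw, ← hav, ha]
          · exact Finset.mem_image.mpr ⟨a, Finset.mem_univ a, by rw [hc'ne a hav, ha]⟩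
      have hcard' : (Finset.image c Finset.univ).card + 1 ≤ (Finset.image c' Finset.univ).card := by
        have := Finset.card_le_card hsub
        rwa [Finset.card_insert_of_notMem hj0'] at this
      exact ih c' hproper (by omega)

lemma exists_U {n m : ℕ} (G : SimpleGraph (Fin n)) [DecidableRel G.Adj] (hmn : m ≤ n)
    (hcol : G.Colorable m) (x : Fin n → ℝ) :
    ∃ U : Matrix (Fin n) (Fin m) ℝ, Uᴴ * U = 1 ∧
      (∀ j, (Uᴴ * G.adjMatrix ℝ * U) j j = 0) ∧ U *ᵥ (Uᴴ *ᵥ x) = x := by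
  classical
  obtain ⟨c, hcp, hcs⟩ := exists_surj_coloring G hmn hcol
  set rep : Fin m → Fin n := fun j => (hcs j).choose with hrep
  have hrepc : ∀ j, c (rep j) = j := fun j => (hcs j).choose_spec
  set q : Fin m → ℝ := fun j => ∑ v, (if c v = j then (x v)^2 else 0) with hq
  have hq0 : ∀ j, 0 ≤ q j := fun j =>
    Finset.sum_nonneg fun v _ => by positivity
  have hqx : ∀ j, q j = 0 → ∀ v, c v = j → x v = 0 := by
    intro j hj v hv
    have := (Finset.sum_eq_zero_iff_of_nonneg (fun v (_ : v ∈ Finset.univ) => by positivity)).mp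
      hj v (Finset.mem_univ v)
    rw [if_pos hv] at this
    exact pow_eq_zero_iff (n := 2) (by norm_num) |>.mp this
  set u : Fin m → Fin n → ℝ := fun j v => if c v = j then
      (if q j = 0 then (if v = rep j then 1 else 0) else x v / Real.sqrt (q j)) else 0 with hu
  have husupp : ∀ j v, c v ≠ j → u j v = 0 := by
    intro j v h
    simp only [hu, if_neg h]
  set U : Matrix (Fin n) (Fin m) ℝ := Matrix.of (fun v j => u j v) with hU
  have hUapp : ∀ v j, U v j = u j v := fun v j => rfl
  have horth : Uᴴ * U = 1 := by
    ext j l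
    rw [Matrix.mul_apply, Matrix.one_apply]
    by_cases hjl : j = l
    · subst hjl
      rw [if_pos rfl]
      by_cases hqj : q j = 0
      · have : ∀ v, u j v = if v = rep j then 1 else 0 := by
          intro v
          by_cases hv : v = rep j
          · subst hv
            rw [hu]
            simp only [if_pos (hrepc j), if_pos hqj, if_pos rfl]
          · rw [if_neg hv]
            by_cases hcv : c v = j
            · rw [hu]; simp only [if_pos hcv, if_pos hqj, if_neg hv]
            · exact husupp j v hcv
        have : ∀ v, Uᴴ j v * U v j = if v = rep j then 1 else 0 := by
          intro v
          rw [conjTranspose_apply, hUapp, star_trivial, this v]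
          split <;> norm_num
        rw [Finset.sum_congr rfl fun v _ => this v]
        simp
      · have hterm : ∀ v, Uᴴ j v * U v j = (if c v = j then (x v)^2 else 0) / q j := by
          intro v
          rw [conjTranspose_apply, hUapp, star_trivial, hu]
          by_cases hcv : c v = j
          · simp only [if_pos hcv, if_neg hqj]
            rw [div_mul_div_comm, Real.mul_self_sqrt (hq0 j), ← sq]
          · simp only [if_neg hcv]
            simp
        rw [Finset.sum_congr rfl fun v _ => hterm v, ← Finset.sum_div]
        exact div_self hqj
    · rw [if_neg hjl]
      refine Finset.sum_eq_zero fun v _ => ?_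
      rw [conjTranspose_apply, hUapp, star_trivial]
      by_cases hcv : c v = j
      · have : c v ≠ l := fun h => hjl (hcv ▸ h ▸ rfl)
        rw [show U v l = u l v from rfl, husupp l v this, mul_zero]
      · rw [husupp j v hcv, zero_mul]
  have hdiag : ∀ j, (Uᴴ * G.adjMatrix ℝ * U) j j = 0 := by
    intro j
    rw [Matrix.mul_assoc, Matrix.mul_apply]
    refine Finset.sum_eq_zero fun v _ => ?_
    rw [conjTranspose_apply, hUapp, star_trivial, Matrix.mul_apply]
    by_cases hcv : c v = j
    · rw [Finset.sum_eq_zero, mul_zero]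
      intro w _
      rw [hUapp]
      by_cases hcw : c w = j
      · have : ¬ G.Adj v w := fun h => hcp v w h (hcv.trans hcw.symm)
        rw [SimpleGraph.adjMatrix_apply, if_neg this, zero_mul]
      · rw [husupp j w hcw, mul_zero]
    · rw [husupp j v hcv, zero_mul]
  refine ⟨U, horth, hdiag, ?_⟩
  have hd : ∀ j, (Uᴴ *ᵥ x) j = if q j = 0 then 0 else Real.sqrt (q j) := by
    intro j
    rw [Matrix.mulVec]
    by_cases hqj : q j = 0
    · rw [if_pos hqj]
      refine Finset.sum_eq_zero fun w _ => ?_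
      simp only [conjTranspose_apply, hUapp, star_trivial]
      by_cases hcw : c w = j
      · rw [hqx j hqj w hcw, mul_zero]
      · rw [husupp j w hcw, zero_mul]
    · rw [if_neg hqj]
      have hterm : ∀ w, Uᴴ j w * x w = (if c w = j then (x w)^2 else 0) / Real.sqrt (q j) := by
        intro w
        rw [conjTranspose_apply, hUapp, star_trivial, hu]
        by_cases hcw : c w = j
        · simp only [if_pos hcw, if_neg hqj]
          rw [div_mul_eq_mul_div, ← sq]
        · simp only [if_neg hcw]; simp
      calc (fun w => Uᴴ j w) ⬝ᵥ x = ∑ w, Uᴴ j w * x w := rfl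
        _ = ∑ w, (if c w = j then (x w)^2 else 0) / Real.sqrt (q j) :=
            Finset.sum_congr rfl fun w _ => hterm w
        _ = q j / Real.sqrt (q j) := by rw [← Finset.sum_div]
        _ = Real.sqrt (q j) := Real.div_sqrt
  funext v
  rw [Matrix.mulVec]
  have honly : ∀ j, j ≠ c v → U v j * (Uᴴ *ᵥ x) j = 0 := by
    intro j hj
    rw [hUapp, husupp j v (fun h => hj h.symm), zero_mul]
  rw [show (fun j => U v j) ⬝ᵥ (Uᴴ *ᵥ x) = ∑ j, U v j * (Uᴴ *ᵥ x) j from rfl,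
    Finset.sum_eq_single (c v) (fun j _ hj => honly j hj) (fun h => absurd (Finset.mem_univ _) h)]
  rw [hUapp, hd]
  by_cases hqv : q (c v) = 0
  · rw [if_pos hqv, mul_zero, hqx (c v) hqv v rfl]
  · rw [if_neg hqv, hu]
    simp only [eq_self_iff_true, if_true, if_neg hqv]
    rw [div_mul_cancel₀]
    exact Real.sqrt_ne_zero'.mpr (lt_of_le_of_ne (hq0 (c v)) (Ne.symm hqv))

lemma dot_shift {a b : ℕ} (M : Matrix (Fin a) (Fin b) ℝ) (u : Fin a → ℝ) (v : Fin b → ℝ) :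
    (Mᴴ *ᵥ u) ⬝ᵥ v = u ⬝ᵥ (M *ᵥ v) := by
  rw [Matrix.conjTranspose_eq_transpose_of_trivial, Matrix.mulVec_transpose,
    Matrix.dotProduct_mulVec]

/-- Hoffman's sum-of-eigenvalues bound: if `n ≥ m ≥ χ(G) ≥ 2` then
`λ₁ + λₙ + λₙ₋₁ + ⋯ + λₙ₋ₘ₊₂ ≤ 0` for the adjacency matrix of `G`. -/
theorem stmt0 {n : ℕ} (G : SimpleGraph (Fin n)) [DecidableRel G.Adj]
    (m : ℕ) (hm : 2 ≤ m) (hmn : m ≤ n)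
    (hχ2 : 2 ≤ G.chromaticNumber) (hχm : G.chromaticNumber ≤ (m : ℕ∞)) :
    eigDesc (G.adjMatrix ℝ) 0 +
      ∑ i ∈ Finset.range (m - 1), eigDesc (G.adjMatrix ℝ) (n - 1 - i) ≤ 0 := by
  classical
  obtain ⟨m', rfl⟩ : ∃ m', m = m' + 1 := ⟨m - 1, by omega⟩
  set A := G.adjMatrix ℝ with hAdef
  have hA : A.IsHermitian := by
    rw [Matrix.IsHermitian, Matrix.conjTranspose_eq_transpose_of_trivial]
    exact G.isSymm_adjMatrix
  have hn0 : 0 < n := by omega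
  set lam := hA.eigenvalues with hlam
  set σ : Equiv.Perm (Fin n) := Tuple.sort (fun j => -lam j) with hσ
  have hanti : ∀ p r : Fin n, p ≤ r → lam (σ r) ≤ lam (σ p) := by
    intro p r hpr
    have := Tuple.monotone_sort (fun j => -lam j) hpr
    simpa using this
  have heig : ∀ (i : ℕ) (h : i < n), eigDesc A i = lam (σ ⟨i, h⟩) := by
    intro i h
    rw [eigDesc, dif_pos ⟨h, hA⟩]
  set x : Fin n → ℝ := ⇑(hA.eigenvectorBasis (σ ⟨0, hn0⟩)) with hx
  set α := lam (σ ⟨0, hn0⟩) with hα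
  have hAx : A *ᵥ x = α • x := hA.mulVec_eigenvectorBasis _
  have hx1 : x ⬝ᵥ x = 1 := by
    have h := hA.eigenvectorBasis.orthonormal.1 (σ ⟨0, hn0⟩)
    have h2 : (inner ℝ (hA.eigenvectorBasis (σ ⟨0, hn0⟩)) (hA.eigenvectorBasis (σ ⟨0, hn0⟩)) : ℝ)
        = 1 := by
      rw [@inner_self_eq_norm_sq_to_K ℝ, h]; norm_num
    rw [PiLp.inner_apply] at h2
    rw [hx]
    simpa [dotProduct, sq] using h2
  have hxAx : x ⬝ᵥ (A *ᵥ x) = α := by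
    rw [hAx, dotProduct_smul, hx1]
    simp
  have hcol : G.Colorable (m' + 1) := by
    rw [← SimpleGraph.chromaticNumber_le_iff_colorable]
    exact_mod_cast hχm
  obtain ⟨U, hU1, hUd, hUx⟩ := exists_U G hmn hcol x
  set C := Uᴴ * A * U with hC
  have hCh : C.IsHermitian := by
    have : Cᴴ = C := by
      rw [hC, conjTranspose_mul, conjTranspose_mul, conjTranspose_conjTranspose, hA.eq,
        Matrix.mul_assoc]
    exact this
  set mu := hCh.eigenvalues with hmu
  have htrC : C.trace = 0 := by
    rw [Matrix.trace]
    exact Finset.sum_eq_zero fun j _ => hUd j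
  set W' : Matrix (Fin (m' + 1)) (Fin (m' + 1)) ℝ :=
    (hCh.eigenvectorUnitary : Matrix (Fin (m' + 1)) (Fin (m' + 1)) ℝ) with hW'
  have hWW : star W' * W' = 1 := (Matrix.mem_unitaryGroup_iff').mp hCh.eigenvectorUnitary.2
  have hsum_mu : ∑ j, mu j = 0 := by
    have h1 : C.trace = (Matrix.diagonal mu).trace := by
      conv_lhs => rw [hCh.spectral_theorem]
      rw [Unitary.conjStarAlgAut_apply, Matrix.trace_mul_cycle, ← hW', hWW, Matrix.one_mul]
      rfl
    rw [htrC] at h1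
    rw [Matrix.trace_diagonal] at h1
    exact h1.symm
  obtain ⟨j0, -, hj0⟩ := Finset.univ.exists_max_image mu ⟨0, Finset.mem_univ 0⟩
  -- Step A : α ≤ mu j0
  set cvec := Uᴴ *ᵥ x with hcvec
  have hcc : cvec ⬝ᵥ cvec = 1 := by
    rw [hcvec, dot_shift, hUx, hx1]
  have hcCc : cvec ⬝ᵥ (C *ᵥ cvec) = α := by
    have h1 : C *ᵥ cvec = α • cvec := by
      rw [hC, ← Matrix.mulVec_mulVec, ← Matrix.mulVec_mulVec, hUx, hAx, Matrix.mulVec_smul,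
        ← hcvec]
    rw [h1, dotProduct_smul, hcc]
    simp
  set V1 : Matrix (Fin (m' + 1)) (Fin 1) ℝ := Matrix.of (fun j (_ : Fin 1) => cvec j) with hV1def
  have hV1 : V1ᴴ * V1 = 1 := by
    ext a b
    fin_cases a; fin_cases b
    rw [Matrix.mul_apply, Matrix.one_apply_eq]
    simpa [dotProduct, conjTranspose_apply, hV1def] using hcc
  have htr1 : (V1ᴴ * C * V1).trace = α := by
    rw [← hcCc, Matrix.trace_fin_one, Matrix.mul_apply]
    have hL : ∀ j, (V1ᴴ * C) 0 j * V1 j 0 = ∑ l, cvec l * C l j * cvec j := by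
      intro j
      rw [Matrix.mul_apply, Finset.sum_mul]
      refine Finset.sum_congr rfl fun l _ => ?_
      rw [conjTranspose_apply, star_trivial]
      rfl
    rw [Finset.sum_congr rfl fun j _ => hL j, Finset.sum_comm]
    rw [show cvec ⬝ᵥ (C *ᵥ cvec) = ∑ l, cvec l * ∑ j, C l j * cvec j from rfl]
    refine Finset.sum_congr rfl fun l _ => ?_
    rw [Finset.mul_sum]
    exact Finset.sum_congr rfl fun j _ => by ring
  have hstepA : α ≤ mu j0 := by
    obtain ⟨s, hs0, hs1, hssum, htr⟩ := exists_weights C hCh V1 hV1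
    have := scalarKF (fun i => -mu i) s hs0 hs1 {j0}
      (by simpa using hssum)
      (by
        intro i hi j hj
        simp only [Finset.mem_singleton] at hi
        subst hi
        simp only [neg_le_neg_iff]
        exact hj0 j (Finset.mem_univ j))
    simp only [Finset.sum_singleton, neg_mul] at this
    rw [Finset.sum_neg_distrib] at this
    have htr' : ∑ i, mu i * s i = α := by rw [← htr, htr1]
    rw [show ∑ i, mu i * s i = α from htr'] at this
    linarith
  -- Step B
  set V2 : Matrix (Fin n) (Fin m') ℝ := (U * W').submatrix id (Fin.succAbove j0) with hV2def
  have hUW : (U * W')ᴴ * (U * W') = 1 := by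
    rw [conjTranspose_mul, Matrix.mul_assoc, ← Matrix.mul_assoc Uᴴ U W', hU1, Matrix.one_mul,
      ← Matrix.star_eq_conjTranspose, hWW]
  have hV2 : V2ᴴ * V2 = 1 := by
    ext a b
    have hsub : (V2ᴴ * V2) a b = ((U * W')ᴴ * (U * W')) (j0.succAbove a) (j0.succAbove b) := by
      simp [Matrix.mul_apply, conjTranspose_apply, hV2def, Matrix.submatrix_apply]
    rw [hsub, hUW, Matrix.one_apply, Matrix.one_apply]
    by_cases hab : a = b
    · subst hab; simp
    · rw [if_neg hab, if_neg (fun h => hab (Fin.succAbove_right_injective h))]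
  have hUWA : (U * W')ᴴ * A * (U * W') = Matrix.diagonal mu := by
    have h1 : (U * W')ᴴ * A * (U * W') = star W' * C * W' := by
      rw [conjTranspose_mul, hC, ← Matrix.star_eq_conjTranspose W']
      simp only [Matrix.mul_assoc]
    rw [h1]
    have := hCh.conjStarAlgAut_star_eigenvectorUnitary
    simp only [Unitary.conjStarAlgAut_apply, Unitary.coe_star, star_star] at this
    rw [show (RCLike.ofReal ∘ hCh.eigenvalues : Fin (m' + 1) → ℝ) = mu from rfl] at this
    exact this
  have htr2 : (V2ᴴ * A * V2).trace = - mu j0 := by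
    have hsub2 : ∀ p r, (V2ᴴ * A * V2) p r
        = ((U * W')ᴴ * A * (U * W')) (j0.succAbove p) (j0.succAbove r) := by
      intro p r
      simp [Matrix.mul_apply, conjTranspose_apply, hV2def, Matrix.submatrix_apply,
        Finset.sum_mul]
    rw [Matrix.trace]
    rw [Finset.sum_congr rfl fun p _ => by
      rw [show (V2ᴴ * A * V2).diag p = (V2ᴴ * A * V2) p p from rfl, hsub2, hUWA,
        Matrix.diagonal_apply_eq]]
    have := Fin.sum_univ_succAbove mu j0
    rw [this] at hsum_mu
    linarith
  -- index set K
  have hidx : ∀ a : Fin m', n - 1 - (a : ℕ) < n := fun a => by omega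
  set K : Finset (Fin n) :=
    Finset.image (fun a : Fin m' => σ ⟨n - 1 - (a : ℕ), hidx a⟩) Finset.univ with hK
  have hKinj : ∀ p ∈ Finset.univ, ∀ r ∈ Finset.univ,
      σ ⟨n - 1 - ((p : Fin m') : ℕ), hidx p⟩ = σ ⟨n - 1 - ((r : Fin m') : ℕ), hidx r⟩ →
      p = r := by
    intro p _ r _ h
    have h2 := σ.injective h
    have h3 : n - 1 - (p : ℕ) = n - 1 - (r : ℕ) := congrArg Fin.val h2
    have hp := p.isLt
    have hr := r.isLt
    exact Fin.ext (by omega)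
  have hKcard : K.card = m' := by
    rw [hK, Finset.card_image_of_injOn hKinj, Finset.card_univ, Fintype.card_fin]
  have hKth : ∀ i ∈ K, ∀ j ∉ K, lam i ≤ lam j := by
    intro i hi j hj
    obtain ⟨a, -, rfl⟩ := Finset.mem_image.mp hi
    set b := σ.symm j with hb
    have hjb : j = σ b := (σ.apply_symm_apply j).symm
    have hbn := b.isLt
    have ha := a.isLt
    have hblt : (b : ℕ) < n - m' := by
      by_contra hcon
      push_neg at hcon
      have ha' : n - 1 - (b : ℕ) < m' := by omega
      apply hj
      rw [hjb, hK]
      refine Finset.mem_image.mpr ⟨⟨n - 1 - (b : ℕ), ha'⟩, Finset.mem_univ _, ?_⟩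
      congr 1
      exact Fin.ext (by simp; omega)
    have hle : b ≤ (⟨n - 1 - (a : ℕ), hidx a⟩ : Fin n) := by
      rw [Fin.le_def]
      simp
      omega
    rw [hjb]
    exact hanti b ⟨n - 1 - (a : ℕ), hidx a⟩ hle
  have hstepB : ∑ i ∈ K, lam i ≤ - mu j0 := by
    obtain ⟨s, hs0, hs1, hssum, htr⟩ := exists_weights A hA V2 hV2
    have := scalarKF lam s hs0 hs1 K (by rw [hKcard]; exact hssum) hKth
    rw [← htr, htr2] at this
    exact this
  -- conclude
  have hgoal1 : eigDesc A 0 = α := heig 0 hn0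
  have hgoal2 : ∑ i ∈ Finset.range (m' + 1 - 1), eigDesc A (n - 1 - i) = ∑ i ∈ K, lam i := by
    rw [show m' + 1 - 1 = m' from rfl, Finset.sum_range fun i => eigDesc A (n - 1 - i)]
    rw [hK, Finset.sum_image hKinj]
    exact Finset.sum_congr rfl fun a _ => heig (n - 1 - (a : ℕ)) (hidx a)
  rw [hgoal1, hgoal2]
  linarith
end

section
/- Let Z be a real symmetric n×n matrix whose off-diagonal entries vanish on non-edges of a graph G (Zᵢⱼ = 0 whenever i ≠ j and ij ∉ E(G), and the diagonal of Z is zero). If c : V(G) → {1,…,m} is a proper coloring of G with m ≥ 2, then λ₁(Z) + λₙ(Z) + λₙ₋₁(Z) + ⋯ + λₙ₋ₘ₊₂(Z) ≤ 0, where λᵢ(Z) is the i-th largest eigenvalue of Z. -/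
open Matrix Finset RealInnerProductSpace

namespace HoffmanAux

variable {n : ℕ}

lemma inner_eq_dot (x y : EuclideanSpace ℝ (Fin n)) :
    ⟪x, y⟫ = (x : Fin n → ℝ) ⬝ᵥ (y : Fin n → ℝ) := by
  simp [PiLp.inner_apply, dotProduct, mul_comm]

lemma sum_dot {ι : Type*} (s : Finset ι) (f : ι → Fin n → ℝ) (v : Fin n → ℝ) :
    (∑ j ∈ s, f j) ⬝ᵥ v = ∑ j ∈ s, f j ⬝ᵥ v := by
  simp only [dotProduct, Finset.sum_apply, Finset.sum_mul]
  exact Finset.sum_comm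

lemma dot_sum {ι : Type*} (s : Finset ι) (v : Fin n → ℝ) (f : ι → Fin n → ℝ) :
    v ⬝ᵥ (∑ j ∈ s, f j) = ∑ j ∈ s, v ⬝ᵥ f j := by
  simp only [dotProduct, Finset.sum_apply, Finset.mul_sum]
  exact Finset.sum_comm

lemma dot_mulVec_symm (A : Matrix (Fin n) (Fin n) ℝ) (hA : A.IsHermitian)
    (v w : Fin n → ℝ) : v ⬝ᵥ (A *ᵥ w) = (A *ᵥ v) ⬝ᵥ w := by
  rw [Matrix.dotProduct_mulVec, ← Matrix.mulVec_transpose, show Aᵀ = A from hA]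

theorem expand_ortho {ι : Type*} [Fintype ι] (b : ι → EuclideanSpace ℝ (Fin n))
    (hb : Orthonormal ℝ b)
    (v : EuclideanSpace ℝ (Fin n)) (hv : v ∈ Submodule.span ℝ (Set.range b)) :
    v = ∑ j, ⟪b j, v⟫ • b j := by
  obtain ⟨c, rfl⟩ := (Submodule.mem_span_range_iff_exists_fun ℝ).1 hv
  congr 1
  ext j
  rw [hb.inner_right_fintype]

/-- bilinear expansion of a quadratic form -/
lemma dot_mulVec_sum_sum {ι : Type*} [Fintype ι] (A : Matrix (Fin n) (Fin n) ℝ)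
    (c d : ι → ℝ) (f g : ι → Fin n → ℝ) :
    (∑ j, c j • f j) ⬝ᵥ (A *ᵥ (∑ j, d j • g j))
      = ∑ j, ∑ j', c j * d j' * (f j ⬝ᵥ (A *ᵥ g j')) := by
  rw [sum_dot]
  refine Finset.sum_congr rfl fun j _ => ?_
  rw [smul_dotProduct, Matrix.dotProduct_mulVec, dot_sum, smul_eq_mul, Finset.mul_sum]
  refine Finset.sum_congr rfl fun j' _ => ?_
  rw [dotProduct_smul, ← Matrix.dotProduct_mulVec, smul_eq_mul]
  ring

/-- trace invariance: two orthonormal families with the same span give the same sum of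
quadratic forms. -/
theorem sum_quad_congr {ι κ : Type*} [Fintype ι] [Fintype κ] [DecidableEq ι] [DecidableEq κ]
    (A : Matrix (Fin n) (Fin n) ℝ)
    (a : ι → EuclideanSpace ℝ (Fin n)) (b : κ → EuclideanSpace ℝ (Fin n))
    (ha : Orthonormal ℝ a) (hb : Orthonormal ℝ b)
    (hspan : Submodule.span ℝ (Set.range a) = Submodule.span ℝ (Set.range b)) :
    ∑ i, (a i : Fin n → ℝ) ⬝ᵥ (A *ᵥ (a i : Fin n → ℝ))
      = ∑ j, (b j : Fin n → ℝ) ⬝ᵥ (A *ᵥ (b j : Fin n → ℝ)) := by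
  have hcard : Fintype.card ι = Fintype.card κ := by
    rw [← finrank_span_eq_card ha.linearIndependent,
      ← finrank_span_eq_card hb.linearIndependent, hspan]
  let e : ι ≃ κ := Fintype.equivOfCardEq hcard
  set b' : ι → EuclideanSpace ℝ (Fin n) := b ∘ e with hb'def
  have hb'o : Orthonormal ℝ b' := hb.comp e e.injective
  have hrange : Set.range b' = Set.range b := e.surjective.range_comp b
  set C : Matrix ι ι ℝ := fun i j => ⟪b' j, a i⟫ with hC
  have hexp : ∀ i, a i = ∑ j, C i j • b' j := by
    intro i
    have hmem : a i ∈ Submodule.span ℝ (Set.range b') := by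
      rw [hrange, ← hspan]; exact Submodule.subset_span (Set.mem_range_self i)
    exact expand_ortho b' hb'o (a i) hmem
  have hrow : C * Cᵀ = 1 := by
    ext i i'
    have h1 : ⟪a i, a i'⟫ = ∑ j, C i j * C i' j := by
      nth_rewrite 1 [hexp i]
      rw [sum_inner]
      refine Finset.sum_congr rfl fun j _ => ?_
      rw [real_inner_smul_left]
    have h2 : ⟪a i, a i'⟫ = if i = i' then (1:ℝ) else 0 := orthonormal_iff_ite.1 ha i i'
    rw [Matrix.mul_apply, Matrix.one_apply, ← h2, h1]
    simp [Matrix.transpose_apply]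
  have hcol : Cᵀ * C = 1 := mul_eq_one_comm.mp hrow
  have hexpPi : ∀ i, (a i : Fin n → ℝ) = ∑ j, C i j • (b' j : Fin n → ℝ) := fun i =>
    by rw [hexp i]; simp [WithLp.ofLp_sum, WithLp.ofLp_smul]
  calc ∑ i, (a i : Fin n → ℝ) ⬝ᵥ (A *ᵥ (a i : Fin n → ℝ))
      = ∑ i, ∑ j, ∑ j', C i j * C i j' * ((b' j : Fin n → ℝ) ⬝ᵥ (A *ᵥ (b' j' : Fin n → ℝ))) := by
        refine Finset.sum_congr rfl fun i _ => ?_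
        rw [hexpPi i, dot_mulVec_sum_sum]
    _ = ∑ j, ∑ j', (∑ i, C i j * C i j') * ((b' j : Fin n → ℝ) ⬝ᵥ (A *ᵥ (b' j' : Fin n → ℝ))) := by
        rw [Finset.sum_comm]
        refine Finset.sum_congr rfl fun j _ => ?_
        rw [Finset.sum_comm]
        refine Finset.sum_congr rfl fun j' _ => ?_
        rw [Finset.sum_mul]
    _ = ∑ j, (b' j : Fin n → ℝ) ⬝ᵥ (A *ᵥ (b' j : Fin n → ℝ)) := by
        refine Finset.sum_congr rfl fun j _ => ?_
        have : ∀ j', (∑ i, C i j * C i j') = if j = j' then (1:ℝ) else 0 := by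
          intro j'
          have := congrFun (congrFun hcol j) j'
          rw [Matrix.mul_apply] at this
          simpa [Matrix.transpose_apply, Matrix.one_apply] using this
        simp only [this, ite_mul, one_mul, zero_mul]
        simp
    _ = ∑ k, (b k : Fin n → ℝ) ⬝ᵥ (A *ᵥ (b k : Fin n → ℝ)) := by
        exact Equiv.sum_comp e (fun k => (b k : Fin n → ℝ) ⬝ᵥ (A *ᵥ (b k : Fin n → ℝ)))

/-- quadratic form in terms of eigenvalues -/
theorem quad_eig {A : Matrix (Fin n) (Fin n) ℝ} (hA : A.IsHermitian)
    (v : EuclideanSpace ℝ (Fin n)) :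
    (v : Fin n → ℝ) ⬝ᵥ (A *ᵥ (v : Fin n → ℝ))
      = ∑ j, hA.eigenvalues j * ⟪hA.eigenvectorBasis j, v⟫ ^ 2 := by
  have h1 : ∀ j, ⟪hA.eigenvectorBasis j, WithLp.toLp 2 (A *ᵥ (v : Fin n → ℝ))⟫
      = hA.eigenvalues j * ⟪hA.eigenvectorBasis j, v⟫ := by
    intro j
    have hm : (A *ᵥ (hA.eigenvectorBasis j : Fin n → ℝ))
        = hA.eigenvalues j • (hA.eigenvectorBasis j : Fin n → ℝ) :=
      hA.mulVec_eigenvectorBasis j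
    rw [inner_eq_dot, WithLp.ofLp_toLp, dot_mulVec_symm A hA, hm,
      smul_dotProduct, ← inner_eq_dot, smul_eq_mul]
  have h2 := hA.eigenvectorBasis.sum_inner_mul_inner v
    (WithLp.toLp 2 (A *ᵥ (v : Fin n → ℝ)))
  rw [inner_eq_dot, WithLp.ofLp_toLp] at h2
  rw [← h2]
  refine Finset.sum_congr rfl fun j _ => ?_
  rw [h1 j, real_inner_comm v]
  ring

/-- reindexing the "last k" entries of `Fin n` by `range k`. -/
lemma filter_sum_eq {k : ℕ} (hk : k ≤ n) (hn : 0 < n) (ν : Fin n → ℝ) :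
    ∑ j ∈ Finset.univ.filter (fun j : Fin n => n - k ≤ j.val), ν j
      = ∑ i ∈ Finset.range k, ν ⟨n - 1 - i, by omega⟩ := by
  refine Finset.sum_bij' (i := fun (j : Fin n) (_ : j ∈ _) => n - 1 - j.val)
    (j := fun (i : ℕ) (hi : i ∈ Finset.range k) => (⟨n - 1 - i, by omega⟩ : Fin n))
    ?_ ?_ ?_ ?_ ?_
  · intro j hj
    simp only [Finset.mem_filter, Finset.mem_univ, true_and] at hj
    have := j.isLt
    simp only [Finset.mem_range]
    omega
  · intro i hi
    simp only [Finset.mem_range] at hi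
    simp only [Finset.mem_filter, Finset.mem_univ, true_and]
    omega
  · intro j hj
    simp only [Finset.mem_filter, Finset.mem_univ, true_and] at hj
    have := j.isLt
    exact Fin.ext (by simp only []; omega)
  · intro i hi
    simp only [Finset.mem_range] at hi
    show n - 1 - (n - 1 - i) = i
    omega
  · intro j hj
    simp only [Finset.mem_filter, Finset.mem_univ, true_and] at hj
    have := j.isLt
    congr 1
    exact (Fin.ext (by simp only []; omega)).symm

/-- discrete rearrangement-type bound: if `0 ≤ u ≤ 1` sums to `k` and `ν` is antitone, then
`∑ ν u` is at least the sum of the `k` smallest values of `ν`. -/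
lemma chebyshev_min {k : ℕ} (hk : k ≤ n) (ν u : Fin n → ℝ)
    (hanti : ∀ i j : Fin n, i ≤ j → ν j ≤ ν i)
    (hu0 : ∀ j, 0 ≤ u j) (hu1 : ∀ j, u j ≤ 1) (htot : ∑ j, u j = k) :
    ∑ j ∈ Finset.univ.filter (fun j : Fin n => n - k ≤ j.val), ν j ≤ ∑ j, ν j * u j := by
  rcases Nat.eq_zero_or_pos k with hk0 | hkpos
  · subst hk0
    have hz : ∀ j ∈ Finset.univ, u j = 0 := by
      intro j _
      have := (Finset.sum_eq_zero_iff_of_nonneg (fun j _ => hu0 j)).1 (by simpa using htot)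
      exact this j (Finset.mem_univ j)
    have he : Finset.univ.filter (fun j : Fin n => n - 0 ≤ j.val) = ∅ := by
      ext j
      simp only [Finset.mem_filter, Finset.mem_univ, true_and, Finset.notMem_empty, iff_false]
      have := j.isLt
      omega
    rw [he]
    simp only [Finset.sum_empty]
    rw [Finset.sum_congr rfl (fun j hj => by rw [hz j hj, mul_zero])]
    simp
  · have hnpos : 0 < n := lt_of_lt_of_le hkpos hk
    set T : Finset (Fin n) := Finset.univ.filter (fun j : Fin n => n - k ≤ j.val) with hT
    have hcardT : (T.card : ℝ) = k := by
      have h1 := filter_sum_eq (n := n) hk hnpos (fun _ => (1:ℝ))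
      simp only [Finset.sum_const, nsmul_eq_mul, mul_one, Finset.card_range] at h1
      exact_mod_cast h1
    set μ0 : ℝ := ν ⟨n - k, by omega⟩ with hμ0
    have hsplit : ∑ j, ν j * u j
        = ∑ j ∈ Finset.univ \ T, ν j * u j + ∑ j ∈ T, ν j * u j :=
      (Finset.sum_sdiff (Finset.filter_subset _ _)).symm
    have hT2 : ∑ j ∈ T, ν j * (1 - u j) = ∑ j ∈ T, ν j - ∑ j ∈ T, ν j * u j := by
      rw [← Finset.sum_sub_distrib]
      exact Finset.sum_congr rfl fun j _ => by ring
    have husplit : ∑ j ∈ Finset.univ \ T, u j + ∑ j ∈ T, u j = (k : ℝ) := by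
      rw [Finset.sum_sdiff (Finset.filter_subset _ _)]
      exact htot
    have hbal : ∑ j ∈ Finset.univ \ T, u j = ∑ j ∈ T, (1 - u j) := by
      have hx : ∑ j ∈ T, (1 - u j) = (k:ℝ) - ∑ j ∈ T, u j := by
        rw [Finset.sum_sub_distrib, Finset.sum_const, nsmul_eq_mul, mul_one, hcardT]
      linarith
    have h1 : μ0 * (∑ j ∈ Finset.univ \ T, u j) ≤ ∑ j ∈ Finset.univ \ T, ν j * u j := by
      rw [Finset.mul_sum]
      refine Finset.sum_le_sum fun j hj => ?_
      have hj' : j.val < n - k := by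
        simp only [hT, Finset.mem_sdiff, Finset.mem_filter, Finset.mem_univ, true_and] at hj
        omega
      have hle : μ0 ≤ ν j := hanti j ⟨n - k, by omega⟩ (by rw [Fin.le_def]; simp; omega)
      exact mul_le_mul_of_nonneg_right hle (hu0 j)
    have h2 : ∑ j ∈ T, ν j * (1 - u j) ≤ μ0 * (∑ j ∈ T, (1 - u j)) := by
      rw [Finset.mul_sum]
      refine Finset.sum_le_sum fun j hj => ?_
      have hj' : n - k ≤ j.val := by
        simp only [hT, Finset.mem_filter, Finset.mem_univ, true_and] at hj
        exact hj
      have hle : ν j ≤ μ0 := hanti ⟨n - k, by omega⟩ j (by rw [Fin.le_def]; simp; omega)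
      have h1u : 0 ≤ 1 - u j := by linarith [hu1 j]
      exact mul_le_mul_of_nonneg_right hle h1u
    have hchain : ∑ j ∈ T, ν j * (1 - u j) ≤ ∑ j ∈ Finset.univ \ T, ν j * u j := by
      calc ∑ j ∈ T, ν j * (1 - u j) ≤ μ0 * (∑ j ∈ T, (1 - u j)) := h2
        _ = μ0 * (∑ j ∈ Finset.univ \ T, u j) := by rw [hbal]
        _ ≤ ∑ j ∈ Finset.univ \ T, ν j * u j := h1
    linarith

/-- Ky Fan type bound: the sum of quadratic forms over an orthonormal family of `k` vectors
is at least the sum of the `k` smallest eigenvalues. -/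
theorem kyfan {k : ℕ} {A : Matrix (Fin n) (Fin n) ℝ} (hA : A.IsHermitian) (hk : k ≤ n)
    (hn : 0 < n) (ν : Fin n → ℝ) (σ : Equiv.Perm (Fin n))
    (hνσ : ∀ i, ν i = hA.eigenvalues (σ i))
    (hanti : ∀ i j : Fin n, i ≤ j → ν j ≤ ν i)
    (w : Fin k → EuclideanSpace ℝ (Fin n)) (hw : Orthonormal ℝ w) :
    ∑ i ∈ Finset.range k, ν ⟨n - 1 - i, by omega⟩
      ≤ ∑ i, (w i : Fin n → ℝ) ⬝ᵥ (A *ᵥ (w i : Fin n → ℝ)) := by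
  set t : Fin n → ℝ := fun j => ∑ i, ⟪hA.eigenvectorBasis j, w i⟫ ^ 2 with ht
  have hqe : ∑ i, (w i : Fin n → ℝ) ⬝ᵥ (A *ᵥ (w i : Fin n → ℝ))
      = ∑ j, hA.eigenvalues j * t j := by
    rw [Finset.sum_congr rfl fun i _ => quad_eig hA (w i), Finset.sum_comm]
    exact Finset.sum_congr rfl fun j _ => by rw [Finset.mul_sum]
  have ht0 : ∀ j, 0 ≤ t j := fun j => Finset.sum_nonneg fun i _ => sq_nonneg _
  have ht1 : ∀ j, t j ≤ 1 := by
    intro j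
    have hb := hw.sum_inner_products_le (hA.eigenvectorBasis j) (s := Finset.univ)
    have hnorm : ‖hA.eigenvectorBasis j‖ = 1 := hA.eigenvectorBasis.orthonormal.1 j
    rw [hnorm, one_pow] at hb
    calc t j = ∑ i, ‖⟪w i, hA.eigenvectorBasis j⟫‖ ^ 2 := by
          refine Finset.sum_congr rfl fun i _ => ?_
          rw [Real.norm_eq_abs, sq_abs, real_inner_comm]
      _ ≤ 1 := hb
  have hpar : ∀ i, ∑ j, ⟪hA.eigenvectorBasis j, w i⟫ ^ 2 = 1 := by
    intro i
    have hp := hA.eigenvectorBasis.sum_inner_mul_inner (w i) (w i)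
    have hni : ⟪w i, w i⟫ = (1:ℝ) := by
      rw [real_inner_self_eq_norm_sq, hw.1 i, one_pow]
    rw [hni] at hp
    rw [← hp]
    refine Finset.sum_congr rfl fun j _ => ?_
    rw [real_inner_comm (w i)]
    ring
  have htot : ∑ j, t ( σ j) = (k : ℝ) := by
    rw [Equiv.sum_comp σ t, ht]
    rw [Finset.sum_comm]
    rw [Finset.sum_congr rfl fun i _ => hpar i]
    simp
  have hcheb := chebyshev_min hk ν (fun j => t (σ j)) hanti (fun j => ht0 _)
    (fun j => ht1 _) htot
  have hmain : ∑ j, ν j * t (σ j) = ∑ j, hA.eigenvalues j * t j := by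
    rw [Finset.sum_congr rfl fun j _ => by rw [hνσ j]]
    exact Equiv.sum_comp σ (fun j => hA.eigenvalues j * t j)
  rw [hqe, ← hmain]
  rw [filter_sum_eq hk hn ν] at hcheb
  exact hcheb

/-- identity reinterpretation of a vector as a member of Euclidean space -/
def toE (v : Fin n → ℝ) : EuclideanSpace ℝ (Fin n) := WithLp.toLp 2 v

lemma inner_toE (v w : Fin n → ℝ) : ⟪toE v, toE w⟫ = v ⬝ᵥ w := inner_eq_dot _ _

lemma coe_smul (c : ℝ) (v : EuclideanSpace ℝ (Fin n)) :
    ((c • v : EuclideanSpace ℝ (Fin n)) : Fin n → ℝ) = c • (v : Fin n → ℝ) := rfl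

end HoffmanAux

open HoffmanAux

/-- Hoffman-type bound for any symmetric matrix supported on the edges of `G`:
if `G` has a proper `m`-colouring with `m ≥ 2`, then
`λ₁(Z) + λₙ(Z) + ⋯ + λₙ₋ₘ₊₂(Z) ≤ 0`. -/
theorem stmt1 {n : ℕ} (G : SimpleGraph (Fin n)) (m : ℕ) (hm : 2 ≤ m) (hmn : m ≤ n)
    (Z : Matrix (Fin n) (Fin n) ℝ) (hZsymm : Z.IsSymm)
    (hZsupp : ∀ i j, ¬ G.Adj i j → Z i j = 0)
    (c : Fin n → Fin m) (hc : ∀ i j, G.Adj i j → c i ≠ c j) :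
    eigDesc Z 0 + ∑ i ∈ Finset.range (m - 1), eigDesc Z (n - 1 - i) ≤ 0 := by
  classical
  have hA : Z.IsHermitian := hZsymm
  have hn : 2 ≤ n := le_trans hm hmn
  have hnpos : 0 < n := by omega
  set μ : Fin n → ℝ := hA.eigenvalues with hμ
  set σ : Equiv.Perm (Fin n) := Tuple.sort (fun j => -μ j) with hσ
  set ν : Fin n → ℝ := fun i => μ (σ i) with hν
  have hanti : ∀ i j : Fin n, i ≤ j → ν j ≤ ν i := by
    intro i j hij
    have hmono := Tuple.monotone_sort (fun j => -μ j) hij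
    simp only [Function.comp_apply] at hmono
    rw [hν]
    simp only []
    linarith
  have hf : ∀ (i : ℕ) (hi : i < n), eigDesc Z i = ν ⟨i, hi⟩ := by
    intro i hi
    simp only [eigDesc]
    rw [dif_pos ⟨hi, hA⟩]
  have hfanti : ∀ i j : ℕ, i ≤ j → j < n → eigDesc Z j ≤ eigDesc Z i := by
    intro i j hij hj
    rw [hf i (lt_of_le_of_lt hij hj), hf j hj]
    exact hanti _ _ (by rw [Fin.mk_le_mk]; exact hij)
  have hνsum : ∑ i, ν i = 0 := by
    have h1 : ∑ i, μ i = Z.trace := by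
      rw [hA.trace_eq_sum_eigenvalues]
      simp [hμ]
    have h2 : Z.trace = 0 := by
      have : ∀ i, Z i i = 0 := fun i => hZsupp i i (G.irrefl)
      simp [Matrix.trace, Matrix.diag, this]
    calc ∑ i, ν i = ∑ i, μ (σ i) := rfl
      _ = ∑ i, μ i := Equiv.sum_comp σ μ
      _ = 0 := h1.trans h2
  have hfsum : ∑ i ∈ Finset.range n, eigDesc Z i = 0 := by
    rw [← Fin.sum_univ_eq_sum_range (eigDesc Z) n, ← hνsum]
    refine Finset.sum_congr rfl fun i _ => ?_
    rw [hf i.val i.isLt]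
  -- the key coloring estimate
  have key : ∃ k : ℕ, k ≤ n ∧ k ≤ m - 1 ∧
      eigDesc Z 0 + ∑ j ∈ Finset.range k, eigDesc Z (n - 1 - j) ≤ 0 := by
    -- unit top eigenvector
    set i0 : Fin n := σ ⟨0, hnpos⟩ with hi0
    set x : EuclideanSpace ℝ (Fin n) := hA.eigenvectorBasis i0 with hxdef
    have hxnorm : ‖x‖ = 1 := hA.eigenvectorBasis.orthonormal.1 i0
    have hxx : ⟪x, x⟫ = (1:ℝ) := by rw [real_inner_self_eq_norm_sq, hxnorm, one_pow]
    have hxne : x ≠ 0 := by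
      intro h; rw [h, norm_zero] at hxnorm; exact one_ne_zero hxnorm.symm
    have hZx : Z *ᵥ (x : Fin n → ℝ) = μ i0 • (x : Fin n → ℝ) := hA.mulVec_eigenvectorBasis i0
    have hqx : (x : Fin n → ℝ) ⬝ᵥ (Z *ᵥ (x : Fin n → ℝ)) = eigDesc Z 0 := by
      rw [hZx, dotProduct_smul, smul_eq_mul, ← inner_eq_dot, hxx, mul_one,
        hf 0 hnpos]
    -- colour pieces (as plain functions)
    set y : Fin m → (Fin n → ℝ) := fun s => (fun i => if c i = s then x i else 0) with hy
    have hysum : ∑ s, y s = (x : Fin n → ℝ) := by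
      funext i
      rw [Finset.sum_apply]
      simp only [hy]
      rw [Finset.sum_ite_eq Finset.univ (c i) (fun _ => x i)]
      simp
    have hydot : ∀ s t, s ≠ t → y s ⬝ᵥ y t = 0 := by
      intro s t hst
      refine Finset.sum_eq_zero fun i _ => ?_
      by_cases h1 : c i = s <;> by_cases h2 : c i = t
      · exact absurd (h1.symm.trans h2) hst
      · simp [hy, h2]
      · simp [hy, h1]
      · simp [hy, h1]
    have hqy : ∀ s, y s ⬝ᵥ (Z *ᵥ y s) = 0 := by
      intro s
      refine Finset.sum_eq_zero fun i _ => ?_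
      show y s i * (Z *ᵥ y s) i = 0
      show y s i * ((fun j => Z i j) ⬝ᵥ y s) = 0
      rw [dotProduct, Finset.mul_sum]
      refine Finset.sum_eq_zero fun j _ => ?_
      by_cases h1 : c i = s
      · by_cases h2 : c j = s
        · have hZ0 : Z i j = 0 := by
            by_cases hij : i = j
            · subst hij; exact hZsupp i i (G.irrefl)
            · exact hZsupp i j (fun hadj => hc i j hadj (by rw [h1, h2]) )
          rw [hZ0]; ring
        · simp [hy, h2]
      · simp [hy, h1]
    -- the orthonormal colour family
    set S : Finset (Fin m) := Finset.univ.filter (fun s => y s ≠ 0) with hS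
    set a : {s // s ∈ S} → EuclideanSpace ℝ (Fin n) :=
      fun s => ‖toE (y s.1)‖⁻¹ • toE (y s.1) with ha
    have hyne : ∀ s : {s // s ∈ S}, toE (y s.1) ≠ 0 := by
      intro s
      have h2 : s.1 ∈ Finset.univ.filter (fun t => y t ≠ 0) := s.2
      intro h; apply (Finset.mem_filter.1 h2).2; simpa [toE] using h
    have hynorm : ∀ s : {s // s ∈ S}, ‖toE (y s.1)‖ ≠ 0 :=
      fun s => norm_ne_zero_iff.2 (hyne s)
    have hao : Orthonormal ℝ a := by
      rw [orthonormal_iff_ite]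
      intro s t
      have hval : ⟪a s, a t⟫ = ‖toE (y s.1)‖⁻¹
          * (‖toE (y t.1)‖⁻¹ * ⟪toE (y s.1), toE (y t.1)⟫) := by
        simp only [ha]
        rw [real_inner_smul_left, real_inner_smul_right]
      by_cases hst : s = t
      · subst hst
        rw [hval, real_inner_self_eq_norm_sq, if_pos rfl, sq]
        field_simp
        exact div_self (hynorm s)
      · rw [hval, inner_toE, hydot s.1 t.1 (fun h => hst (Subtype.ext h)), if_neg hst]
        ring
    set W : Submodule ℝ (EuclideanSpace ℝ (Fin n)) := Submodule.span ℝ (Set.range a) with hW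
    have hyW : ∀ s : Fin m, toE (y s) ∈ W := by
      intro s
      by_cases hs : toE (y s) = 0
      · rw [hs]; exact W.zero_mem
      · have hsS : s ∈ S := by
          rw [hS, Finset.mem_filter]
          exact ⟨Finset.mem_univ s, fun h => hs (by simp [toE, h])⟩
        have hrepr : toE (y s) = ‖toE (y s)‖ • a ⟨s, hsS⟩ := by
          rw [ha]
          simp only []
          rw [smul_inv_smul₀ (norm_ne_zero_iff.2 hs)]
        rw [hrepr]
        exact W.smul_mem _ (Submodule.subset_span (Set.mem_range_self _))
    have hxW : x ∈ W := by
      have hxE : (∑ s, toE (y s)) = x := by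
        apply WithLp.ofLp_injective; simp [toE, WithLp.ofLp_sum, hysum]
      rw [← hxE]
      exact Submodule.sum_mem W (fun s _ => hyW s)
    -- orthogonal complement of x inside W
    set W' : Submodule ℝ (EuclideanSpace ℝ (Fin n)) := W ⊓ (ℝ ∙ x)ᗮ with hW'
    set k := Module.finrank ℝ W' with hkdef
    set w0 := stdOrthonormalBasis ℝ W' with hw0
    have hworth : ∀ i, ⟪x, ((w0 i : W') : EuclideanSpace ℝ (Fin n))⟫ = (0:ℝ) := by
      intro i
      have hmem : ((w0 i : W') : EuclideanSpace ℝ (Fin n)) ∈ (ℝ ∙ x)ᗮ :=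
        (Submodule.mem_inf.1 (w0 i).2).2
      exact hmem x (Submodule.mem_span_singleton_self x)
    set b : Option (Fin k) → EuclideanSpace ℝ (Fin n) :=
      fun o => o.elim x (fun i => ((w0 i : W') : EuclideanSpace ℝ (Fin n))) with hb
    have hbo : Orthonormal ℝ b := by
      rw [orthonormal_iff_ite]
      rintro (_ | i) (_ | j)
      · simpa [hb] using hxx
      · simpa [hb] using hworth j
      · simp only [hb, Option.elim]
        rw [real_inner_comm]
        simpa using hworth i
      · have h2 := orthonormal_iff_ite.1 w0.orthonormal i j
        rw [Submodule.coe_inner] at h2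
        by_cases hij : i = j
        · subst hij
          simp only [hb, Option.elim]
          rw [h2]
          simp
        · simp only [hb, Option.elim]
          rw [h2]
          simp [hij]
    have hW'span : W' ≤ Submodule.span ℝ (Set.range b) := by
      intro v hv
      have hexp := w0.sum_repr ⟨v, hv⟩
      have hexp' : v = ∑ i, (w0.repr ⟨v, hv⟩ i) • ((w0 i : W') : EuclideanSpace ℝ (Fin n)) := by
        have hcoe := congrArg (fun z : W' => (z : EuclideanSpace ℝ (Fin n))) hexp
        simp only [AddSubmonoidClass.coe_finset_sum, SetLike.val_smul] at hcoe
        exact hcoe.symm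
      rw [hexp']
      exact Submodule.sum_mem _ fun i _ =>
        Submodule.smul_mem _ _ (Submodule.subset_span ⟨some i, rfl⟩)
    have hspan : Submodule.span ℝ (Set.range a) = Submodule.span ℝ (Set.range b) := by
      apply le_antisymm
      · rw [← hW]
        intro v hv
        have h2 : v - ⟪x, v⟫ • x ∈ W' := by
          rw [hW']
          refine Submodule.mem_inf.2 ⟨Submodule.sub_mem W hv (W.smul_mem _ hxW), ?_⟩
          rw [Submodule.mem_orthogonal_singleton_iff_inner_right, inner_sub_right,
            real_inner_smul_right, hxx]
          ring
        have hdecomp : v = ⟪x, v⟫ • x + (v - ⟪x, v⟫ • x) := by abel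
        rw [hdecomp]
        exact Submodule.add_mem _
          (Submodule.smul_mem _ _ (Submodule.subset_span ⟨none, rfl⟩)) (hW'span h2)
      · rw [Submodule.span_le]
        rintro v ⟨o, rfl⟩
        rcases o with _ | i
        · exact hxW
        · exact (Submodule.mem_inf.1 (w0 i).2).1
    -- trace identity on W
    have htrid := sum_quad_congr Z a b hao hbo hspan
    have hqa0 : ∑ s, (a s : Fin n → ℝ) ⬝ᵥ (Z *ᵥ (a s : Fin n → ℝ)) = 0 := by
      refine Finset.sum_eq_zero fun s _ => ?_
      have hrw : (a s : Fin n → ℝ) = ‖toE (y s.1)‖⁻¹ • y s.1 := by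
        simp only [ha, toE, WithLp.ofLp_smul, WithLp.ofLp_toLp]
      rw [hrw, smul_dotProduct, Matrix.mulVec_smul, dotProduct_smul, hqy s.1]
      simp
    have hqb : ∑ o, (b o : Fin n → ℝ) ⬝ᵥ (Z *ᵥ (b o : Fin n → ℝ))
        = eigDesc Z 0 + ∑ i, (((w0 i : W') : EuclideanSpace ℝ (Fin n)) : Fin n → ℝ)
            ⬝ᵥ (Z *ᵥ (((w0 i : W') : EuclideanSpace ℝ (Fin n)) : Fin n → ℝ)) := by
      rw [Fintype.sum_option]
      rw [show (b none : Fin n → ℝ) = (x : Fin n → ℝ) from rfl, hqx]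
      rfl
    have hsum0 : eigDesc Z 0 + ∑ i, (((w0 i : W') : EuclideanSpace ℝ (Fin n)) : Fin n → ℝ)
        ⬝ᵥ (Z *ᵥ (((w0 i : W') : EuclideanSpace ℝ (Fin n)) : Fin n → ℝ)) = 0 := by
      rw [← hqb, ← htrid, hqa0]
    -- Ky Fan bound
    have hkn : k ≤ n := by
      have h1 := Submodule.finrank_le W'
      rwa [finrank_euclideanSpace, Fintype.card_fin] at h1
    have hw0o : Orthonormal ℝ (fun i => ((w0 i : W') : EuclideanSpace ℝ (Fin n))) := by
      rw [orthonormal_iff_ite]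
      intro i j
      have := orthonormal_iff_ite.1 w0.orthonormal i j
      rwa [Submodule.coe_inner] at this
    have hkf := kyfan hA hkn hnpos ν σ (fun i => rfl) hanti
      (fun i => ((w0 i : W') : EuclideanSpace ℝ (Fin n))) hw0o
    -- k ≤ m - 1
    have hfinW : Module.finrank ℝ W = S.card := by
      rw [hW, finrank_span_eq_card hao.linearIndependent, Fintype.card_coe]
    have hxnotW' : x ∉ W' := by
      intro hxW'
      have := (Submodule.mem_inf.1 hxW').2 x (Submodule.mem_span_singleton_self x)
      rw [hxx] at this
      exact one_ne_zero this
    have hne : W' ≠ W := by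
      intro h
      rw [← h] at hxW
      exact hxnotW' hxW
    have hlt : W' < W := lt_of_le_of_ne inf_le_left hne
    have hkm : k < S.card := by
      rw [← hfinW]
      exact Submodule.finrank_lt_finrank_of_lt hlt
    have hSm : S.card ≤ m := le_trans (Finset.card_le_univ S) (by simp)
    refine ⟨k, hkn, by omega, ?_⟩
    have hconv : ∑ j ∈ Finset.range k, eigDesc Z (n - 1 - j)
        = ∑ j ∈ Finset.range k, ν ⟨n - 1 - j, by omega⟩ := by
      refine Finset.sum_congr rfl fun j hj => ?_
      exact hf (n - 1 - j) (by omega)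
    rw [hconv]
    linarith
  by_cases hcase : 0 ≤ eigDesc Z (n - m)
  · -- compare with the total sum
    set T : Finset ℕ := insert 0 ((Finset.range (m-1)).image (fun i => n-1-i)) with hT
    have h0img : 0 ∉ (Finset.range (m-1)).image (fun i => n-1-i) := by
      intro h
      obtain ⟨i, hi, hieq⟩ := Finset.mem_image.1 h
      rw [Finset.mem_range] at hi
      omega
    have htarget : eigDesc Z 0 + ∑ i ∈ Finset.range (m - 1), eigDesc Z (n - 1 - i)
        = ∑ j ∈ T, eigDesc Z j := by
      rw [hT, Finset.sum_insert h0img, Finset.sum_image ?_]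
      intro i hi j hj hij
      simp only [Finset.coe_range, Set.mem_Iio] at hi hj hij
      omega
    have hTsub : T ⊆ Finset.range n := by
      intro j hj
      rw [hT, Finset.mem_insert] at hj
      rcases hj with rfl | hj
      · exact Finset.mem_range.2 hnpos
      · obtain ⟨i, hi, rfl⟩ := Finset.mem_image.1 hj
        rw [Finset.mem_range] at hi ⊢
        omega
    have hsdiff : ∑ j ∈ T, eigDesc Z j + ∑ j ∈ Finset.range n \ T, eigDesc Z j = 0 := by
      rw [add_comm, Finset.sum_sdiff hTsub]
      exact hfsum
    have hpos : 0 ≤ ∑ j ∈ Finset.range n \ T, eigDesc Z j := by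
      refine Finset.sum_nonneg fun j hj => ?_
      rw [Finset.mem_sdiff, Finset.mem_range] at hj
      obtain ⟨hjn, hjT⟩ := hj
      have hjle : j ≤ n - m := by
        by_contra hgt
        push_neg at hgt
        apply hjT
        rw [hT, Finset.mem_insert]
        right
        refine Finset.mem_image.2 ⟨n - 1 - j, ?_, by omega⟩
        rw [Finset.mem_range]
        omega
      calc (0:ℝ) ≤ eigDesc Z (n - m) := hcase
        _ ≤ eigDesc Z j := hfanti j (n - m) hjle (by omega)
    rw [htarget]
    linarith
  · push_neg at hcase
    obtain ⟨k, hkn, hkm1, hkey⟩ := key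
    have hsplit : ∑ i ∈ Finset.range (m-1), eigDesc Z (n-1-i)
        = ∑ i ∈ Finset.range k, eigDesc Z (n-1-i)
          + ∑ i ∈ Finset.Ico k (m-1), eigDesc Z (n-1-i) := by
      exact (Finset.sum_range_add_sum_Ico _ hkm1).symm
    have htail : ∑ i ∈ Finset.Ico k (m-1), eigDesc Z (n-1-i) ≤ 0 := by
      refine Finset.sum_nonpos fun i hi => ?_
      rw [Finset.mem_Ico] at hi
      calc eigDesc Z (n-1-i) ≤ eigDesc Z (n - m) :=
            hfanti (n - m) (n - 1 - i) (by omega) (by omega)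
        _ ≤ 0 := le_of_lt hcase
    rw [hsplit]
    linarith
end

section
/- For any real symmetric n×n matrix M and any integer 1 ≤ k ≤ n, the sum of the k largest eigenvalues of M equals the maximum of ⟨M, X⟩ = tr(MX) over all real symmetric matrices X with tr X = k and 0 ⪯ X ⪯ I. -/
private lemma kyfan_sum_nat {n k : ℕ} (hk : 1 ≤ k) (hkn : k ≤ n) (F : ℕ → ℝ) :
    ∑ i ∈ Finset.univ.filter (fun i : Fin n => (i:ℕ) < k), F i = ∑ i ∈ Finset.range k, F i := by
  have hn : 0 < n := lt_of_lt_of_le hk hkn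
  apply Finset.sum_nbij' (i := fun a : Fin n => (a : ℕ))
    (j := fun m => if h : m < n then (⟨m, h⟩ : Fin n) else ⟨0, hn⟩) <;>
    intro a ha <;> simp_all <;> rw [dif_pos (lt_of_lt_of_le ha hkn)] <;> simp_all

/-- Ky Fan's theorem: the sum of the `k` largest eigenvalues of a symmetric matrix `M`
is the maximum of `⟨M, X⟩ = tr (M X)` over symmetric `X` with `tr X = k` and
`0 ⪯ X ⪯ I`. -/
theorem stmt2 {n : ℕ} (M : Matrix (Fin n) (Fin n) ℝ) (hM : M.IsSymm)
    (k : ℕ) (hk : 1 ≤ k) (hkn : k ≤ n) :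
    IsGreatest {r : ℝ | ∃ X : Matrix (Fin n) (Fin n) ℝ, X.IsSymm ∧
        X.trace = (k : ℝ) ∧ X.PosSemidef ∧ (1 - X).PosSemidef ∧ r = (M * X).trace}
      (∑ i ∈ Finset.range k, eigDesc M i) := by
  classical
  have hn : 0 < n := lt_of_lt_of_le hk hkn
  have hMh : M.IsHermitian := by
    rwa [Matrix.IsHermitian, Matrix.conjTranspose_eq_transpose_of_trivial]
  set lam : Fin n → ℝ := hMh.eigenvalues with hlam
  set σ : Equiv.Perm (Fin n) := Tuple.sort (fun j => -lam j) with hσ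
  set V : Matrix (Fin n) (Fin n) ℝ := (hMh.eigenvectorUnitary : Matrix (Fin n) (Fin n) ℝ)
    with hVdef
  have hV1 : star V * V = 1 := Matrix.mem_unitaryGroup_iff'.mp hMh.eigenvectorUnitary.2
  have hV2 : V * star V = 1 := Matrix.mem_unitaryGroup_iff.mp hMh.eigenvectorUnitary.2
  have hspec : M = V * Matrix.diagonal lam * star V := by
    have := hMh.spectral_theorem
    simpa using this
  -- the descending eigenvalue function
  have hdesc : ∀ (i : ℕ) (h : i < n), eigDesc M i = lam (σ ⟨i, h⟩) := by
    intro i h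
    simp only [eigDesc, dif_pos (show i < n ∧ M.IsHermitian from ⟨h, hMh⟩)]; rfl
  -- transfer between `range k` sums and `filter` sums over `Fin n`
  have hsum_nat := fun F : ℕ → ℝ => kyfan_sum_nat (n := n) hk hkn F
  have hsum_eig : ∑ i ∈ Finset.range k, eigDesc M i
      = ∑ i ∈ Finset.univ.filter (fun i : Fin n => (i:ℕ) < k), lam (σ i) := by
    rw [← hsum_nat (fun m => eigDesc M m)]
    apply Finset.sum_congr rfl
    intro i hi
    simp only [Finset.mem_filter] at hi
    exact hdesc i i.isLt
  have hcard : (Finset.univ.filter (fun i : Fin n => (i:ℕ) < k)).card = k := by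
    have h : Finset.univ.filter (fun i : Fin n => (i:ℕ) < k)
        = (Finset.range k).attachFin (fun m hm => lt_of_lt_of_le (Finset.mem_range.mp hm) hkn) := by
      ext i; simp
    rw [h, Finset.card_attachFin, Finset.card_range]
  -- trace formula
  have htrace_formula : ∀ X : Matrix (Fin n) (Fin n) ℝ,
      (M * X).trace = ∑ i, lam i * ((star V * X * V) i i) := by
    intro X
    have e1 : M * X = (V * Matrix.diagonal lam) * (star V * X) := by
      rw [hspec]; simp only [mul_assoc]
    have e2 : (star V * X) * (V * Matrix.diagonal lam)
        = (star V * X * V) * Matrix.diagonal lam := by simp only [mul_assoc]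
    rw [e1, Matrix.trace_mul_comm, e2]
    simp [Matrix.trace, Matrix.mul_diagonal, mul_comm]
  -- sortedness
  have hg_anti : ∀ i j : Fin n, i ≤ j → lam (σ j) ≤ lam (σ i) := by
    intro i j hij
    have := Tuple.monotone_sort (fun j => -lam j) hij
    simpa [hσ] using this
  constructor
  · -- membership: the projection onto the top-k eigenspaces
    set p : Fin n → ℝ := fun i => if ((σ.symm i : Fin n) : ℕ) < k then 1 else 0 with hp
    set X : Matrix (Fin n) (Fin n) ℝ := V * Matrix.diagonal p * star V with hX
    have hXpsd : X.PosSemidef := by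
      have hdp : (Matrix.diagonal p).PosSemidef :=
        Matrix.posSemidef_diagonal_iff.mpr fun i => by
          simp only [hp]; split <;> norm_num
      simpa [hX, Matrix.star_eq_conjTranspose] using hdp.mul_mul_conjTranspose_same V
    have hone : 1 - X = V * Matrix.diagonal (fun i => 1 - p i) * star V := by
      have hd : Matrix.diagonal (fun i => 1 - p i) = 1 - Matrix.diagonal p := by
        ext i j
        by_cases h : i = j <;> simp [h, Matrix.diagonal_apply, Matrix.one_apply]
      rw [hd, Matrix.mul_sub, Matrix.sub_mul, mul_one, hV2, hX]
    have hIXpsd : (1 - X).PosSemidef := by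
      rw [hone]
      have hdp : (Matrix.diagonal (fun i => 1 - p i)).PosSemidef :=
        Matrix.posSemidef_diagonal_iff.mpr fun i => by
          simp only [hp]; split <;> norm_num
      simpa [Matrix.star_eq_conjTranspose] using hdp.mul_mul_conjTranspose_same V
    have hpsum : ∑ i, p i = (k : ℝ) := by
      rw [← Equiv.sum_comp σ p]
      simp only [hp, Equiv.symm_apply_apply]
      rw [Finset.sum_boole]
      norm_cast
    have htrX : X.trace = (k : ℝ) := by
      rw [hX, Matrix.trace_mul_cycle, hV1, one_mul, Matrix.trace_diagonal, hpsum]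
    refine ⟨X, ?_, htrX, hXpsd, hIXpsd, ?_⟩
    · have := hXpsd.1
      rwa [Matrix.IsHermitian, Matrix.conjTranspose_eq_transpose_of_trivial] at this
    · rw [htrace_formula X]
      have hY : star V * X * V = Matrix.diagonal p := by
        rw [hX]
        simp only [← mul_assoc]
        rw [hV1, one_mul, mul_assoc, hV1, mul_one]
      rw [hY, hsum_eig]
      simp only [Matrix.diagonal_apply_eq, hp, mul_ite, mul_one, mul_zero]
      rw [← Equiv.sum_comp σ (fun a => if ((σ.symm a : Fin n) : ℕ) < k then lam a else 0)]
      simp only [Equiv.symm_apply_apply]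
      rw [Finset.sum_filter]
  · -- upper bound
    rintro r ⟨X, hXs, hXtr, hXpsd, hIXpsd, rfl⟩
    set Y : Matrix (Fin n) (Fin n) ℝ := star V * X * V with hY
    have hYpsd : Y.PosSemidef := by
      simpa [hY, Matrix.star_eq_conjTranspose] using hXpsd.conjTranspose_mul_mul_same V
    have hIY : 1 - Y = star V * (1 - X) * V := by
      rw [Matrix.mul_sub, Matrix.sub_mul, mul_one, hV1, hY]
    have hIYpsd : (1 - Y).PosSemidef := by
      rw [hIY]
      simpa [Matrix.star_eq_conjTranspose] using hIXpsd.conjTranspose_mul_mul_same V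
    have hy0 : ∀ i, 0 ≤ Y i i := fun i => hYpsd.diag_nonneg
    have hy1 : ∀ i, Y i i ≤ 1 := by
      intro i
      have h := hIYpsd.diag_nonneg (i := i)
      simp only [Matrix.sub_apply, Matrix.one_apply_eq] at *
      have : 0 ≤ (1 - Y) i i := by simpa using h
      simp only [Matrix.sub_apply, Matrix.one_apply_eq] at this
      linarith
    have htrY : ∑ i, Y i i = (k : ℝ) := by
      have : Y.trace = (k : ℝ) := by
        rw [hY, Matrix.trace_mul_cycle, hV2, one_mul, hXtr]
      simpa [Matrix.trace, Matrix.diag] using this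
    -- the rearrangement bound
    set t : ℝ := lam (σ ⟨k - 1, by omega⟩) with ht
    set g : Fin n → ℝ := fun i => lam (σ i) with hg
    set z : Fin n → ℝ := fun i => Y (σ i) (σ i) with hz
    have hzsum : ∑ i, z i = (k : ℝ) := by
      rw [hz, Equiv.sum_comp σ (fun i => Y i i), htrY]
    have hmain : ∑ i, g i * z i ≤ ∑ i ∈ Finset.univ.filter (fun i : Fin n => (i:ℕ) < k), g i := by
      have hsplit : ∑ i, (g i - t) * z i
          ≤ ∑ i ∈ Finset.univ.filter (fun i : Fin n => (i:ℕ) < k), (g i - t) := by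
        rw [← Finset.sum_filter_add_sum_filter_not Finset.univ (fun i : Fin n => (i:ℕ) < k)
          (fun i => (g i - t) * z i)]
        have h1 : ∑ i ∈ Finset.univ.filter (fun i : Fin n => (i:ℕ) < k), (g i - t) * z i
            ≤ ∑ i ∈ Finset.univ.filter (fun i : Fin n => (i:ℕ) < k), (g i - t) := by
          apply Finset.sum_le_sum
          intro i hi
          simp only [Finset.mem_filter] at hi
          have hti : t ≤ g i := hg_anti i ⟨k - 1, by omega⟩ (by simp [Fin.le_def]; omega)
          exact mul_le_of_le_one_right (by linarith) (hz ▸ hy1 (σ i))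
        have h2 : ∑ i ∈ Finset.univ.filter (fun i : Fin n => ¬ (i:ℕ) < k), (g i - t) * z i ≤ 0 := by
          apply Finset.sum_nonpos
          intro i hi
          simp only [Finset.mem_filter] at hi
          have hti : g i ≤ t := hg_anti ⟨k - 1, by omega⟩ i (by simp [Fin.le_def]; omega)
          exact mul_nonpos_of_nonpos_of_nonneg (by linarith) (hz ▸ hy0 (σ i))
        linarith
      have e1 : ∑ i, g i * z i = ∑ i, (g i - t) * z i + t * (k : ℝ) := by
        rw [← hzsum, Finset.mul_sum, ← Finset.sum_add_distrib]
        apply Finset.sum_congr rfl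
        intro i _
        ring
      have e2 : ∑ i ∈ Finset.univ.filter (fun i : Fin n => (i:ℕ) < k), (g i - t)
          = (∑ i ∈ Finset.univ.filter (fun i : Fin n => (i:ℕ) < k), g i) - t * (k : ℝ) := by
        rw [Finset.sum_sub_distrib, Finset.sum_const, hcard, nsmul_eq_mul]
        ring
      linarith [hsplit, e1.le, e2.le]
    have hfin : (M * X).trace = ∑ i, g i * z i := by
      rw [htrace_formula X, ← Equiv.sum_comp σ (fun i => lam i * Y i i)]
    rw [hfin, hsum_eig]
    exact hmain
end

section
/- Let G be a graph with fractional chromatic number χ_f(G), let w ∈ ℝ₊^V, let N be the vertex-coclique incidence matrix of G, and let y ≥ 0 satisfy Ny = 𝟙 and 𝟙ᵀy = χ_f(G). Define M = Σ_{S independent, w(S)≠0} y(S) · Diag(χ_S) √w √wᵀ Diag(χ_S) / w(S), where χ_S is the characteristic vector of independent set S and w(S) = wᵀχ_S. Then tr M = χ_f(G) − Σ_{S : w(S)=0} y(S) ≤ χ_f(G), M ⪰ 0, M √w = √w, M ⪯ I, Mᵢⱼ = 0 for every edge ij, and ⟨√w √wᵀ, M⟩ = wᵀ𝟙. -/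
/-- The rank-one matrix `√w √wᵀ`. -/
noncomputable def sqrtRank1 {n : ℕ} (w : Fin n → ℝ) : Matrix (Fin n) (Fin n) ℝ :=
  Matrix.of fun i j => Real.sqrt (w i) * Real.sqrt (w j)

/-- The fractional chromatic number of `G`: the infimum of the total weight `𝟙ᵀy`
over nonnegative fractional colourings `y` indexed by independent sets. -/
noncomputable def fracChrom {n : ℕ} (G : SimpleGraph (Fin n)) : ℝ :=
  sInf {t : ℝ | ∃ y : Finset (Fin n) → ℝ, (∀ S, 0 ≤ y S) ∧
    (∀ S, y S ≠ 0 → ∀ u ∈ S, ∀ v ∈ S, ¬ G.Adj u v) ∧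
    (∀ v, 1 ≤ ∑ S ∈ Finset.univ.filter (fun S => v ∈ S), y S) ∧
    t = ∑ S, y S}

open scoped Classical in
/-- The matrix `M = Σ_{S : w(S) ≠ 0} y(S) · Diag(χ_S) √w √wᵀ Diag(χ_S) / w(S)`. -/
noncomputable def fracMatrix {n : ℕ} (w : Fin n → ℝ) (y : Finset (Fin n) → ℝ) :
    Matrix (Fin n) (Fin n) ℝ :=
  ∑ S ∈ Finset.univ.filter (fun S : Finset (Fin n) => (∑ v ∈ S, w v) ≠ 0),
    (y S / ∑ v ∈ S, w v) •
      Matrix.of (fun i j => (if i ∈ S then 1 else 0) * (Real.sqrt (w i) * Real.sqrt (w j)) *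
        (if j ∈ S then 1 else 0))

open scoped Classical in
lemma sum_indicator_eq {n : ℕ} (S : Finset (Fin n)) (f : Fin n → ℝ) :
    ∑ i ∈ S, f i = ∑ i, (if i ∈ S then (1:ℝ) else 0) * f i := by
  simp [ite_mul, Finset.sum_ite_mem, Finset.univ_inter]

lemma sum_swap3 {ι κ : Type*} (A : Finset ι) (B : Finset κ) (g : κ → ι → ι → ℝ) :
    ∑ i ∈ A, ∑ j ∈ A, ∑ S ∈ B, g S i j = ∑ S ∈ B, ∑ i ∈ A, ∑ j ∈ A, g S i j :=
  calc ∑ i ∈ A, ∑ j ∈ A, ∑ S ∈ B, g S i j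
      = ∑ i ∈ A, ∑ S ∈ B, ∑ j ∈ A, g S i j :=
        Finset.sum_congr rfl fun i _ =>
          Finset.sum_comm (s := A) (t := B) (f := fun j S => g S i j)
    _ = ∑ S ∈ B, ∑ i ∈ A, ∑ j ∈ A, g S i j :=
        Finset.sum_comm (s := A) (t := B) (f := fun i S => ∑ j ∈ A, g S i j)

open scoped Classical in
lemma fracMatrix_quadform {n : ℕ} (w : Fin n → ℝ) (y : Finset (Fin n) → ℝ) (x : Fin n → ℝ) :
    dotProduct x ((fracMatrix w y).mulVec x) =
      ∑ S ∈ Finset.univ.filter (fun S : Finset (Fin n) => (∑ v ∈ S, w v) ≠ 0),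
        (y S / ∑ v ∈ S, w v) * (∑ i ∈ S, Real.sqrt (w i) * x i) ^ 2 := by
  classical
  unfold fracMatrix
  simp only [Matrix.mulVec, dotProduct, Matrix.sum_apply, Matrix.smul_apply,
    Matrix.of_apply, smul_eq_mul, Finset.sum_mul, Finset.mul_sum]
  calc (∑ i, ∑ j, ∑ S ∈ Finset.univ.filter (fun S : Finset (Fin n) => (∑ v ∈ S, w v) ≠ 0),
          x i * ((y S / ∑ v ∈ S, w v) *
            ((if i ∈ S then (1:ℝ) else 0) * (Real.sqrt (w i) * Real.sqrt (w j)) *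
              (if j ∈ S then 1 else 0)) * x j))
      = ∑ S ∈ Finset.univ.filter (fun S : Finset (Fin n) => (∑ v ∈ S, w v) ≠ 0),
          ∑ i, ∑ j,
          x i * ((y S / ∑ v ∈ S, w v) *
            ((if i ∈ S then (1:ℝ) else 0) * (Real.sqrt (w i) * Real.sqrt (w j)) *
              (if j ∈ S then 1 else 0)) * x j) := by
        exact sum_swap3 _ _ _
    _ = _ := by
        refine Finset.sum_congr rfl fun S _ => ?_
        rw [sq, sum_indicator_eq S (fun i => Real.sqrt (w i) * x i), Finset.sum_mul_sum,
          Finset.mul_sum]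
        refine Finset.sum_congr rfl fun i _ => ?_
        rw [Finset.mul_sum]
        refine Finset.sum_congr rfl fun j _ => ?_
        ring

open scoped Classical in
lemma fracMatrix_herm {n : ℕ} (w : Fin n → ℝ) (y : Finset (Fin n) → ℝ) :
    (fracMatrix w y).IsHermitian := by
  classical
  show (fracMatrix w y).conjTranspose = fracMatrix w y
  ext i j
  rw [Matrix.conjTranspose_apply, star_trivial]
  unfold fracMatrix
  simp only [Matrix.sum_apply, Matrix.smul_apply, Matrix.of_apply, smul_eq_mul]
  exact Finset.sum_congr rfl fun S _ => by ring

open scoped Classical in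
lemma fracMatrix_mulVec_sqrt {n : ℕ} {G : SimpleGraph (Fin n)} (w : Fin n → ℝ)
    (hw : ∀ i, 0 ≤ w i) (y : Finset (Fin n) → ℝ)
    (hyN : ∀ v, ∑ S ∈ Finset.univ.filter (fun S => v ∈ S), y S = 1) :
    (fracMatrix w y).mulVec (fun i => Real.sqrt (w i)) = (fun i => Real.sqrt (w i)) := by
  classical
  funext i
  unfold fracMatrix
  simp only [Matrix.mulVec, dotProduct, Matrix.sum_apply, Matrix.smul_apply,
    Matrix.of_apply, smul_eq_mul, Finset.sum_mul]
  rw [Finset.sum_comm]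
  have hterm : ∀ S ∈ Finset.univ.filter (fun S : Finset (Fin n) => (∑ v ∈ S, w v) ≠ 0),
      (∑ j, (y S / ∑ v ∈ S, w v) *
        ((if i ∈ S then (1:ℝ) else 0) * (Real.sqrt (w i) * Real.sqrt (w j)) *
          (if j ∈ S then 1 else 0)) * Real.sqrt (w j))
      = y S * ((if i ∈ S then (1:ℝ) else 0) * Real.sqrt (w i)) := by
    intro S hS
    have hSne : (∑ v ∈ S, w v) ≠ 0 := by simpa using hS
    have hrw : ∀ j, (y S / ∑ v ∈ S, w v) *
        ((if i ∈ S then (1:ℝ) else 0) * (Real.sqrt (w i) * Real.sqrt (w j)) *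
          (if j ∈ S then 1 else 0)) * Real.sqrt (w j)
        = (y S / ∑ v ∈ S, w v) * ((if i ∈ S then (1:ℝ) else 0) * Real.sqrt (w i)) *
            (if j ∈ S then w j else 0) := by
      intro j
      by_cases hj : j ∈ S
      · simp only [hj, if_true]
        conv_rhs => rw [← Real.mul_self_sqrt (hw j)]
        ring
      · simp [hj]
    rw [Finset.sum_congr rfl fun j _ => hrw j, ← Finset.mul_sum,
      Finset.sum_ite_mem, Finset.univ_inter]
    field_simp
  rw [Finset.sum_congr rfl hterm]
  by_cases hwi : w i = 0
  · have h0 : Real.sqrt (w i) = 0 := by rw [hwi, Real.sqrt_zero]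
    simp [h0]
  · have hmem : ∀ S : Finset (Fin n), i ∈ S → (∑ v ∈ S, w v) ≠ 0 := by
      intro S hiS h0
      exact hwi (le_antisymm (h0 ▸ Finset.single_le_sum (fun v _ => hw v) hiS) (hw i))
    have hrw2 : ∀ S : Finset (Fin n),
        y S * ((if i ∈ S then (1:ℝ) else 0) * Real.sqrt (w i))
        = if i ∈ S then y S * Real.sqrt (w i) else 0 := by
      intro S; by_cases hS : i ∈ S <;> simp [hS]
    rw [Finset.sum_congr rfl fun S _ => hrw2 S, Finset.sum_ite, Finset.sum_const_zero, add_zero]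
    have hfil : (Finset.univ.filter (fun S : Finset (Fin n) => (∑ v ∈ S, w v) ≠ 0)).filter
        (fun S => i ∈ S) = Finset.univ.filter (fun S : Finset (Fin n) => i ∈ S) := by
      ext S
      simp only [Finset.mem_filter, Finset.mem_univ, true_and]
      exact ⟨fun h => h.2, fun h => ⟨hmem S h, h⟩⟩
    rw [hfil, ← Finset.sum_mul, hyN i, one_mul]

open scoped Classical in
/-- Theorem 3 of the paper: the matrix `M` built from an optimal fractional colouring
`y` (with `Ny = 𝟙`, `𝟙ᵀy = χ_f(G)`) satisfies `tr M = χ_f(G) − Σ_{S : w(S)=0} y(S) ≤ χ_f(G)`,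
`0 ⪯ M ⪯ I`, `M √w = √w`, `Mᵢⱼ = 0` on edges, and `⟨√w √wᵀ, M⟩ = wᵀ𝟙`. -/
theorem stmt8 {n : ℕ} (G : SimpleGraph (Fin n)) (w : Fin n → ℝ) (hw : ∀ i, 0 ≤ w i)
    (y : Finset (Fin n) → ℝ) (hy0 : ∀ S, 0 ≤ y S)
    (hyind : ∀ S, y S ≠ 0 → ∀ u ∈ S, ∀ v ∈ S, ¬ G.Adj u v)
    (hyN : ∀ v, ∑ S ∈ Finset.univ.filter (fun S => v ∈ S), y S = 1)
    (hyopt : ∑ S, y S = fracChrom G) :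
    (fracMatrix w y).trace =
        fracChrom G - (∑ S ∈ Finset.univ.filter (fun S : Finset (Fin n) => (∑ v ∈ S, w v) = 0), y S) ∧
    (fracMatrix w y).trace ≤ fracChrom G ∧
    (fracMatrix w y).PosSemidef ∧
    (fracMatrix w y).mulVec (fun i => Real.sqrt (w i)) = (fun i => Real.sqrt (w i)) ∧
    (1 - fracMatrix w y).PosSemidef ∧
    (∀ i j, G.Adj i j → fracMatrix w y i j = 0) ∧
    (sqrtRank1 w * fracMatrix w y).trace = ∑ i, w i := by
  classical
  set F := Finset.univ.filter (fun S : Finset (Fin n) => (∑ v ∈ S, w v) ≠ 0) with hF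
  -- trace
  have htr : (fracMatrix w y).trace = ∑ S ∈ F, y S := by
    unfold fracMatrix
    rw [Matrix.trace_sum]
    refine Finset.sum_congr rfl fun S hS => ?_
    have hSne : (∑ v ∈ S, w v) ≠ 0 := by simpa [hF] using hS
    rw [Matrix.trace_smul]
    have : Matrix.trace (Matrix.of fun i j => (if i ∈ S then (1:ℝ) else 0) *
        (Real.sqrt (w i) * Real.sqrt (w j)) * (if j ∈ S then 1 else 0)) = ∑ v ∈ S, w v := by
      rw [Matrix.trace]
      have : ∀ i : Fin n, (Matrix.diag (Matrix.of fun i j => (if i ∈ S then (1:ℝ) else 0) *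
          (Real.sqrt (w i) * Real.sqrt (w j)) * (if j ∈ S then 1 else 0))) i
          = if i ∈ S then w i else 0 := by
        intro i
        by_cases hi : i ∈ S <;>
          simp [Matrix.diag, hi, Real.mul_self_sqrt (hw i)]
      rw [Finset.sum_congr rfl fun i _ => this i, Finset.sum_ite_mem, Finset.univ_inter]
    rw [this, smul_eq_mul, div_mul_cancel₀ _ hSne]
  have hsplit : (∑ S ∈ F, y S) +
      (∑ S ∈ Finset.univ.filter (fun S : Finset (Fin n) => (∑ v ∈ S, w v) = 0), y S)
      = fracChrom G := by
    rw [← hyopt, ← Finset.sum_filter_add_sum_filter_not Finset.univ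
      (fun S : Finset (Fin n) => (∑ v ∈ S, w v) ≠ 0) y]
    congr 1
    apply Finset.sum_congr _ fun _ _ => rfl
    ext S; simp
  have htr' : (fracMatrix w y).trace =
      fracChrom G - ∑ S ∈ Finset.univ.filter
        (fun S : Finset (Fin n) => (∑ v ∈ S, w v) = 0), y S := by
    rw [htr]; linarith [hsplit]
  refine ⟨htr', ?_, ?_, fracMatrix_mulVec_sqrt (G := G) w hw y hyN, ?_, ?_, ?_⟩
  · rw [htr']
    have : 0 ≤ ∑ S ∈ Finset.univ.filter
        (fun S : Finset (Fin n) => (∑ v ∈ S, w v) = 0), y S :=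
      Finset.sum_nonneg fun S _ => hy0 S
    linarith
  · -- PSD
    refine Matrix.posSemidef_iff_dotProduct_mulVec.mpr ⟨fracMatrix_herm w y, fun x => ?_⟩
    rw [star_trivial, fracMatrix_quadform]
    refine Finset.sum_nonneg fun S hS => ?_
    exact mul_nonneg (div_nonneg (hy0 S) (Finset.sum_nonneg fun v _ => hw v)) (sq_nonneg _)
  · -- 1 - M PSD
    refine Matrix.posSemidef_iff_dotProduct_mulVec.mpr ⟨(Matrix.isHermitian_one).sub (fracMatrix_herm w y), fun x => ?_⟩
    rw [star_trivial, Matrix.sub_mulVec, dotProduct_sub, Matrix.one_mulVec, sub_nonneg,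
      fracMatrix_quadform]
    have h1 : ∀ S ∈ F, (y S / ∑ v ∈ S, w v) * (∑ i ∈ S, Real.sqrt (w i) * x i) ^ 2
        ≤ y S * ∑ i ∈ S, x i ^ 2 := by
      intro S hS
      have hSne : (∑ v ∈ S, w v) ≠ 0 := by simpa [hF] using hS
      have hwS : 0 ≤ ∑ v ∈ S, w v := Finset.sum_nonneg fun v _ => hw v
      have hCS : (∑ i ∈ S, Real.sqrt (w i) * x i) ^ 2
          ≤ (∑ v ∈ S, w v) * ∑ i ∈ S, x i ^ 2 := by
        have := Finset.sum_mul_sq_le_sq_mul_sq S (fun i => Real.sqrt (w i)) x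
        simpa [Real.sq_sqrt (hw _)] using this
      calc (y S / ∑ v ∈ S, w v) * (∑ i ∈ S, Real.sqrt (w i) * x i) ^ 2
          ≤ (y S / ∑ v ∈ S, w v) * ((∑ v ∈ S, w v) * ∑ i ∈ S, x i ^ 2) :=
            mul_le_mul_of_nonneg_left hCS (div_nonneg (hy0 S) hwS)
        _ = y S * ∑ i ∈ S, x i ^ 2 := by field_simp
    have h2 : ∑ S ∈ F, y S * ∑ i ∈ S, x i ^ 2 ≤ ∑ S, y S * ∑ i ∈ S, x i ^ 2 :=
      Finset.sum_le_sum_of_subset_of_nonneg (Finset.filter_subset _ _)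
        (fun S _ _ => mul_nonneg (hy0 S) (Finset.sum_nonneg fun i _ => sq_nonneg _))
    have h3 : ∑ S : Finset (Fin n), y S * ∑ i ∈ S, x i ^ 2 = ∑ i, x i * x i := by
      have : ∀ S : Finset (Fin n), y S * ∑ i ∈ S, x i ^ 2
          = ∑ i, (if i ∈ S then y S * x i ^ 2 else 0) := by
        intro S
        rw [Finset.sum_ite_mem, Finset.univ_inter, Finset.mul_sum]
      rw [Finset.sum_congr rfl fun S _ => this S, Finset.sum_comm]
      refine Finset.sum_congr rfl fun i _ => ?_
      rw [← Finset.sum_filter, ← Finset.sum_mul, hyN i, one_mul, sq]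
    calc ∑ S ∈ F, (y S / ∑ v ∈ S, w v) * (∑ i ∈ S, Real.sqrt (w i) * x i) ^ 2
        ≤ ∑ S ∈ F, y S * ∑ i ∈ S, x i ^ 2 := Finset.sum_le_sum h1
      _ ≤ ∑ S : Finset (Fin n), y S * ∑ i ∈ S, x i ^ 2 := h2
      _ = ∑ i, x i * x i := h3
      _ = dotProduct x x := by simp [dotProduct]
  · -- edges
    intro i j hij
    unfold fracMatrix
    rw [Matrix.sum_apply]
    refine Finset.sum_eq_zero fun S _ => ?_
    by_cases hyS : y S = 0
    · simp [hyS]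
    · by_cases hi : i ∈ S
      · by_cases hj : j ∈ S
        · exact absurd hij (hyind S hyS i hi j hj)
        · simp [hj]
      · simp [hi]
  · -- trace of product
    have hmv := fracMatrix_mulVec_sqrt (G := G) w hw y hyN
    rw [Matrix.trace]
    simp only [Matrix.diag_apply, Matrix.mul_apply, sqrtRank1, Matrix.of_apply]
    rw [Finset.sum_comm]
    have : ∀ j : Fin n, (∑ i, Real.sqrt (w i) * Real.sqrt (w j) * fracMatrix w y j i)
        = Real.sqrt (w j) * ((fracMatrix w y).mulVec (fun i => Real.sqrt (w i)) j) := by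
      intro j
      rw [Matrix.mulVec, dotProduct, Finset.mul_sum]
      exact Finset.sum_congr rfl fun i _ => by ring
    rw [Finset.sum_congr rfl fun j _ => this j, hmv]
    exact Finset.sum_congr rfl fun j _ => Real.mul_self_sqrt (hw j)
end

section
/- Let G be a graph on n vertices and k = χ_f(G) its fractional chromatic number. Then for every nonnegative weight vector w ∈ ℝ₊^V, ϑ_k(G;w) ≥ wᵀ𝟙, where ϑ_k(G;w) = sup{ ⟨√w √wᵀ, X⟩ : X symmetric, tr X = k, Xᵢⱼ = 0 ∀ ij ∈ E(G), 0 ⪯ X ⪯ I }. -/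
/-- The weighted Narasimhan–Manber parameter `ϑ_k(G; w)`, in its SDP (dual) formulation:
the supremum of `⟨√w √wᵀ, X⟩` over symmetric `X` with `tr X = k`, `X` vanishing on the
edges of `G`, and `0 ⪯ X ⪯ I`. -/
noncomputable def thetaSup {n : ℕ} (G : SimpleGraph (Fin n)) (w : Fin n → ℝ) (k : ℝ) : ℝ :=
  sSup {r : ℝ | ∃ X : Matrix (Fin n) (Fin n) ℝ, X.IsSymm ∧ X.trace = k ∧
    (∀ i j, G.Adj i j → X i j = 0) ∧ X.PosSemidef ∧ (1 - X).PosSemidef ∧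
    r = (sqrtRank1 w * X).trace}

open Finset Matrix

variable {n : ℕ}

noncomputable def cov (y : Finset (Fin n) → ℝ) (v : Fin n) : ℝ :=
  ∑ S ∈ Finset.univ.filter (fun S => v ∈ S), y S

lemma sum_bij_insert (v : Fin n) (f : Finset (Fin n) → ℝ) (p : Finset (Fin n) → Prop)
    [DecidablePred p] (hp : ∀ S, v ∉ S → (p S ↔ p (insert v S))) :
    ∑ S ∈ univ.filter (fun S => p S ∧ v ∉ S), f (insert v S)
      = ∑ S ∈ univ.filter (fun S => p S ∧ v ∈ S), f S := by
  refine Finset.sum_nbij' (i := fun S => insert v S) (j := fun S => S.erase v) ?_ ?_ ?_ ?_ ?_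
  · intro S hS
    simp only [mem_filter, mem_univ, true_and] at hS ⊢
    exact ⟨(hp S hS.2).mp hS.1, mem_insert_self v S⟩
  · intro S hS
    simp only [mem_filter, mem_univ, true_and] at hS ⊢
    have h1 : v ∉ S.erase v := notMem_erase v S
    have h2 : insert v (S.erase v) = S := insert_erase hS.2
    refine ⟨(hp _ h1).mpr ?_, h1⟩
    rw [h2]; exact hS.1
  · intro S hS
    simp only [mem_filter, mem_univ, true_and] at hS
    exact erase_insert hS.2
  · intro S hS
    simp only [mem_filter, mem_univ, true_and] at hS
    exact insert_erase hS.2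
  · intro S hS; rfl

lemma cov_split (y : Finset (Fin n) → ℝ) (u v : Fin n) :
    cov y u = ∑ S ∈ univ.filter (fun S => u ∈ S ∧ v ∈ S), y S
      + ∑ S ∈ univ.filter (fun S => u ∈ S ∧ v ∉ S), y S := by
  rw [cov, ← Finset.sum_filter_add_sum_filter_not (univ.filter (fun S => u ∈ S))
    (fun S => v ∈ S), Finset.filter_filter, Finset.filter_filter]

lemma total_split (y : Finset (Fin n) → ℝ) (v : Fin n) :
    ∑ S, y S = ∑ S ∈ univ.filter (fun S => v ∈ S), y S
      + ∑ S ∈ univ.filter (fun S => v ∉ S), y S := by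
  rw [← Finset.sum_filter_add_sum_filter_not univ (fun S => v ∈ S)]

lemma fixOne (G : SimpleGraph (Fin n)) (y : Finset (Fin n) → ℝ)
    (h0 : ∀ S, 0 ≤ y S) (hind : ∀ S, y S ≠ 0 → ∀ u ∈ S, ∀ v ∈ S, ¬ G.Adj u v)
    (v : Fin n) (hv : 1 ≤ cov y v) :
    ∃ y' : Finset (Fin n) → ℝ, (∀ S, 0 ≤ y' S) ∧
      (∀ S, y' S ≠ 0 → ∀ u ∈ S, ∀ v' ∈ S, ¬ G.Adj u v') ∧
      (∀ u, u ≠ v → cov y' u = cov y u) ∧ cov y' v = 1 ∧ (∑ S, y' S) = ∑ S, y S := by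
  classical
  set c := cov y v with hc
  have hc0 : 0 < c := lt_of_lt_of_le one_pos hv
  have hcne : c ≠ 0 := ne_of_gt hc0
  have hfac : 0 ≤ 1 - 1/c := by
    have : 1/c ≤ 1 := by
      rw [div_le_one hc0]; exact hv
    linarith
  refine ⟨fun S => if v ∈ S then y S / c else y S + (1 - 1/c) * y (insert v S), ?_, ?_, ?_, ?_, ?_⟩
  · intro S
    by_cases h : v ∈ S
    · simp only [h, if_true]; exact div_nonneg (h0 S) (le_of_lt hc0)
    · simp only [h, if_false]
      exact add_nonneg (h0 S) (mul_nonneg hfac (h0 _))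
  · intro S hS u hu v' hv'
    by_cases h : v ∈ S
    · simp only [h, if_true] at hS
      exact hind S (fun h' => hS (by rw [h', zero_div])) u hu v' hv'
    · simp only [h, if_false] at hS
      by_cases h1 : y S = 0
      · have h2 : y (insert v S) ≠ 0 := by
          intro h2; exact hS (by rw [h1, h2, zero_add, mul_zero])
        exact hind _ h2 u (mem_insert_of_mem hu) v' (mem_insert_of_mem hv')
      · exact hind S h1 u hu v' hv'
  · intro u hu
    rw [cov_split _ u v, cov_split y u v]
    have hA : ∑ S ∈ univ.filter (fun S => u ∈ S ∧ v ∈ S),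
        (if v ∈ S then y S / c else y S + (1 - 1/c) * y (insert v S))
        = ∑ S ∈ univ.filter (fun S => u ∈ S ∧ v ∈ S), y S / c := by
      apply Finset.sum_congr rfl
      intro S hS
      simp only [mem_filter] at hS
      rw [if_pos hS.2.2]
    have hB : ∑ S ∈ univ.filter (fun S => u ∈ S ∧ v ∉ S),
        (if v ∈ S then y S / c else y S + (1 - 1/c) * y (insert v S))
        = ∑ S ∈ univ.filter (fun S => u ∈ S ∧ v ∉ S), (y S + (1 - 1/c) * y (insert v S)) := by
      apply Finset.sum_congr rfl
      intro S hS
      simp only [mem_filter] at hS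
      rw [if_neg hS.2.2]
    rw [hA, hB, Finset.sum_add_distrib, ← Finset.mul_sum,
      sum_bij_insert v y (fun S => u ∈ S) (fun S hS => by
        constructor
        · intro h; exact mem_insert_of_mem h
        · intro h; rcases Finset.mem_insert.mp h with h | h
          · exact absurd h hu
          · exact h)]
    rw [← Finset.sum_div]
    field_simp
    ring
  · rw [cov]
    have hA : ∑ S ∈ univ.filter (fun S => v ∈ S),
        (if v ∈ S then y S / c else y S + (1 - 1/c) * y (insert v S))
        = ∑ S ∈ univ.filter (fun S => v ∈ S), y S / c := by
      apply Finset.sum_congr rfl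
      intro S hS
      simp only [mem_filter] at hS
      rw [if_pos hS.2]
    rw [hA, ← Finset.sum_div, ← cov, ← hc, div_self hcne]
  · rw [total_split _ v, total_split y v]
    have hA : ∑ S ∈ univ.filter (fun S => v ∈ S),
        (if v ∈ S then y S / c else y S + (1 - 1/c) * y (insert v S))
        = ∑ S ∈ univ.filter (fun S => v ∈ S), y S / c := by
      apply Finset.sum_congr rfl
      intro S hS
      simp only [mem_filter] at hS
      rw [if_pos hS.2]
    have hB : ∑ S ∈ univ.filter (fun S => v ∉ S),
        (if v ∈ S then y S / c else y S + (1 - 1/c) * y (insert v S))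
        = ∑ S ∈ univ.filter (fun S => v ∉ S), (y S + (1 - 1/c) * y (insert v S)) := by
      apply Finset.sum_congr rfl
      intro S hS
      simp only [mem_filter] at hS
      rw [if_neg hS.2]
    have hbij : ∑ S ∈ univ.filter (fun S => v ∉ S), y (insert v S)
        = ∑ S ∈ univ.filter (fun S => v ∈ S), y S := by
      have := sum_bij_insert v y (fun _ => True) (fun S _ => Iff.rfl)
      simpa using this
    rw [hA, hB, Finset.sum_add_distrib, ← Finset.mul_sum, hbij, ← Finset.sum_div]
    field_simp
    ring

lemma fixAll (G : SimpleGraph (Fin n)) (s : Finset (Fin n)) :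
    ∀ y : Finset (Fin n) → ℝ, (∀ S, 0 ≤ y S) →
      (∀ S, y S ≠ 0 → ∀ u ∈ S, ∀ v ∈ S, ¬ G.Adj u v) → (∀ u, 1 ≤ cov y u) →
    ∃ y' : Finset (Fin n) → ℝ, (∀ S, 0 ≤ y' S) ∧
      (∀ S, y' S ≠ 0 → ∀ u ∈ S, ∀ v' ∈ S, ¬ G.Adj u v') ∧
      (∀ u, 1 ≤ cov y' u) ∧ (∀ u ∈ s, cov y' u = 1) ∧ (∑ S, y' S) = ∑ S, y S := by
  classical
  induction s using Finset.induction_on with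
  | empty =>
    intro y h0 hind hcov
    exact ⟨y, h0, hind, hcov, fun u hu => absurd hu (notMem_empty u), rfl⟩
  | @insert v s hv ih =>
    intro y h0 hind hcov
    obtain ⟨y1, h01, hind1, hcov1, heq1, htot1⟩ := ih y h0 hind hcov
    obtain ⟨y2, h02, hind2, hpres, hcv, htot2⟩ := fixOne G y1 h01 hind1 v (hcov1 v)
    refine ⟨y2, h02, hind2, ?_, ?_, htot2.trans htot1⟩
    · intro u
      by_cases h : u = v
      · rw [h, hcv]
      · rw [hpres u h]; exact hcov1 u
    · intro u hu
      rcases Finset.mem_insert.mp hu with h | h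
      · rw [h, hcv]
      · by_cases h' : u = v
        · rw [h', hcv]
        · rw [hpres u h']; exact heq1 u h

lemma equalize (G : SimpleGraph (Fin n)) (y : Finset (Fin n) → ℝ)
    (h0 : ∀ S, 0 ≤ y S) (hind : ∀ S, y S ≠ 0 → ∀ u ∈ S, ∀ v ∈ S, ¬ G.Adj u v)
    (hcov : ∀ u, 1 ≤ cov y u) :
    ∃ y' : Finset (Fin n) → ℝ, (∀ S, 0 ≤ y' S) ∧
      (∀ S, y' S ≠ 0 → ∀ u ∈ S, ∀ v' ∈ S, ¬ G.Adj u v') ∧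
      (∀ u, cov y' u = 1) ∧ y' ∅ = 0 ∧ (∑ S, y' S) ≤ ∑ S, y S := by
  classical
  obtain ⟨y1, h01, hind1, _, heq1, htot1⟩ := fixAll G univ y h0 hind hcov
  refine ⟨fun S => if S = ∅ then 0 else y1 S, ?_, ?_, ?_, if_pos rfl, ?_⟩
  · intro S
    dsimp only
    by_cases h : S = ∅
    · rw [if_pos h]
    · rw [if_neg h]; exact h01 S
  · intro S hS u hu v' hv'
    dsimp only at hS
    by_cases h : S = ∅
    · rw [if_pos h] at hS; exact absurd rfl hS
    · rw [if_neg h] at hS; exact hind1 S hS u hu v' hv'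
  · intro u
    rw [← heq1 u (mem_univ u), cov, cov]
    apply Finset.sum_congr rfl
    intro S hS
    simp only [mem_filter] at hS
    rw [if_neg (Finset.ne_empty_of_mem hS.2)]
  · rw [← htot1]
    apply Finset.sum_le_sum
    intro S _
    by_cases h : S = ∅
    · rw [if_pos h]; exact h01 S
    · rw [if_neg h]

noncomputable def qvec (w : Fin n → ℝ) (S : Finset (Fin n)) : Fin n → ℝ :=
  if h : S.Nonempty then
    (if 0 < ∑ j ∈ S, w j then
      fun i => if i ∈ S then Real.sqrt (w i) / Real.sqrt (∑ j ∈ S, w j) else 0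
     else fun i => if i = S.min' h then 1 else 0)
  else 0

lemma qvec_support (w : Fin n → ℝ) (S : Finset (Fin n)) (i : Fin n) (hi : i ∉ S) :
    qvec w S i = 0 := by
  unfold qvec
  by_cases h : S.Nonempty
  · rw [dif_pos h]
    by_cases h2 : 0 < ∑ j ∈ S, w j
    · rw [if_pos h2, if_neg hi]
    · rw [if_neg h2, if_neg]
      intro he
      exact hi (he ▸ S.min'_mem h)
  · rw [dif_neg h]; rfl

lemma qvec_normsq (w : Fin n → ℝ) (hw : ∀ i, 0 ≤ w i) (S : Finset (Fin n)) (h : S.Nonempty) :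
    ∑ i ∈ S, (qvec w S i)^2 = 1 := by
  unfold qvec
  rw [dif_pos h]
  by_cases h2 : 0 < ∑ j ∈ S, w j
  · rw [if_pos h2]
    have : ∀ i ∈ S, (if i ∈ S then Real.sqrt (w i) / Real.sqrt (∑ j ∈ S, w j) else 0)^2
        = w i / (∑ j ∈ S, w j) := by
      intro i hi
      rw [if_pos hi, div_pow, Real.sq_sqrt (hw i), Real.sq_sqrt (le_of_lt h2)]
    rw [Finset.sum_congr rfl this, ← Finset.sum_div, div_self (ne_of_gt h2)]
  · rw [if_neg h2]
    have : ∀ i ∈ S, (if i = S.min' h then (1:ℝ) else 0)^2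
        = if i = S.min' h then 1 else 0 := by
      intro i _
      by_cases he : i = S.min' h
      · simp [he]
      · simp [he]
    rw [Finset.sum_congr rfl this, Finset.sum_ite_eq' S (S.min' h), if_pos (S.min'_mem h)]

lemma qvec_dot (w : Fin n → ℝ) (hw : ∀ i, 0 ≤ w i) (S : Finset (Fin n)) (h : S.Nonempty) :
    (∑ i ∈ S, Real.sqrt (w i) * qvec w S i)^2 = ∑ j ∈ S, w j := by
  unfold qvec
  rw [dif_pos h]
  by_cases h2 : 0 < ∑ j ∈ S, w j
  · rw [if_pos h2]
    have : ∀ i ∈ S, Real.sqrt (w i) *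
        (if i ∈ S then Real.sqrt (w i) / Real.sqrt (∑ j ∈ S, w j) else 0)
        = w i / Real.sqrt (∑ j ∈ S, w j) := by
      intro i hi
      rw [if_pos hi, ← mul_div_assoc, Real.mul_self_sqrt (hw i)]
    rw [Finset.sum_congr rfl this, ← Finset.sum_div, div_pow,
      Real.sq_sqrt (le_of_lt h2), pow_two, mul_div_assoc, div_self (ne_of_gt h2), mul_one]
  · rw [if_neg h2]
    have hz : ∑ j ∈ S, w j = 0 := le_antisymm (not_lt.mp h2) (Finset.sum_nonneg fun j _ => hw j)
    have hweach : ∀ i ∈ S, w i = 0 := by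
      intro i hi
      exact (Finset.sum_eq_zero_iff_of_nonneg (fun j _ => hw j)).mp hz i hi
    have : ∀ i ∈ S, Real.sqrt (w i) * (if i = S.min' h then (1:ℝ) else 0)
        = if i = S.min' h then Real.sqrt (w i) else 0 := by
      intro i _
      by_cases he : i = S.min' h
      · simp [he]
      · simp [he]
    rw [Finset.sum_congr rfl this, Finset.sum_ite_eq' S (S.min' h), if_pos (S.min'_mem h),
      hweach _ (S.min'_mem h), Real.sqrt_zero, hz, zero_pow two_ne_zero]

lemma qvec_univ_eq (w : Fin n → ℝ) (S : Finset (Fin n)) (f : Fin n → ℝ) :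
    ∑ i, qvec w S i * f i = ∑ i ∈ S, qvec w S i * f i := by
  symm
  apply Finset.sum_subset (Finset.subset_univ S)
  intro i _ hi
  rw [qvec_support w S i hi, zero_mul]

lemma qvec_cs (w : Fin n → ℝ) (hw : ∀ i, 0 ≤ w i) (S : Finset (Fin n)) (h : S.Nonempty)
    (x : Fin n → ℝ) : (∑ i, qvec w S i * x i)^2 ≤ ∑ i ∈ S, (x i)^2 := by
  rw [qvec_univ_eq]
  calc (∑ i ∈ S, qvec w S i * x i)^2
      ≤ (∑ i ∈ S, (qvec w S i)^2) * ∑ i ∈ S, (x i)^2 :=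
        Finset.sum_mul_sq_le_sq_mul_sq S _ _
    _ = ∑ i ∈ S, (x i)^2 := by rw [qvec_normsq w hw S h, one_mul]

noncomputable def XM (w : Fin n → ℝ) (y : Finset (Fin n) → ℝ) : Matrix (Fin n) (Fin n) ℝ :=
  Matrix.of fun i j => ∑ S, y S * (qvec w S i * qvec w S j)

lemma swap_cov (y : Finset (Fin n) → ℝ) (f : Fin n → ℝ) :
    ∑ S, y S * ∑ i ∈ S, f i = ∑ i, cov y i * f i := by
  classical
  have h1 : ∀ S : Finset (Fin n), y S * ∑ i ∈ S, f i
      = ∑ i, (if i ∈ S then y S * f i else 0) := by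
    intro S
    rw [Finset.sum_ite_mem, Finset.univ_inter, Finset.mul_sum]
  rw [Finset.sum_congr rfl (fun S _ => h1 S), Finset.sum_comm]
  apply Finset.sum_congr rfl
  intro i _
  rw [cov, Finset.sum_mul, ← Finset.sum_filter]

lemma XM_quad (w : Fin n → ℝ) (y : Finset (Fin n) → ℝ) (x : Fin n → ℝ) :
    x ⬝ᵥ (XM w y *ᵥ x) = ∑ S, y S * (∑ i, qvec w S i * x i)^2 := by
  calc x ⬝ᵥ (XM w y *ᵥ x)
      = ∑ i, ∑ j, ∑ S, y S * ((qvec w S i * x i) * (qvec w S j * x j)) := by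
        simp only [dotProduct, Matrix.mulVec, XM, Matrix.of_apply, Finset.mul_sum,
          Finset.sum_mul]
        apply Finset.sum_congr rfl; intro i _
        apply Finset.sum_congr rfl; intro j _
        apply Finset.sum_congr rfl; intro S _
        ring
    _ = ∑ S, ∑ i, ∑ j, y S * ((qvec w S i * x i) * (qvec w S j * x j)) := by
        have h1 : ∀ i : Fin n,
            (∑ j, ∑ S : Finset (Fin n), y S * ((qvec w S i * x i) * (qvec w S j * x j)))
            = ∑ S : Finset (Fin n), ∑ j, y S * ((qvec w S i * x i) * (qvec w S j * x j)) :=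
          fun i => Finset.sum_comm
        rw [Finset.sum_congr rfl fun i _ => h1 i]
        exact Finset.sum_comm
    _ = ∑ S, y S * (∑ i, qvec w S i * x i)^2 := by
        apply Finset.sum_congr rfl; intro S _
        rw [pow_two, Finset.sum_mul_sum, Finset.mul_sum]
        apply Finset.sum_congr rfl; intro i _
        rw [Finset.mul_sum]

lemma qvec_sumsq_univ (w : Fin n → ℝ) (S : Finset (Fin n)) :
    ∑ i, (qvec w S i)^2 = ∑ i ∈ S, (qvec w S i)^2 := by
  symm
  apply Finset.sum_subset (Finset.subset_univ S)
  intro i _ hi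
  rw [qvec_support w S i hi]
  exact zero_pow two_ne_zero

lemma star_id (x : Fin n → ℝ) : star x = x := funext fun i => star_trivial _

lemma trace_rank1_mul (u : Fin n → ℝ) (X : Matrix (Fin n) (Fin n) ℝ) :
    (Matrix.of (fun i j => u i * u j) * X).trace = u ⬝ᵥ (X *ᵥ u) := by
  rw [Matrix.trace]
  simp only [Matrix.diag_apply, Matrix.mul_apply, Matrix.of_apply, dotProduct,
    Matrix.mulVec, Finset.mul_sum]
  rw [Finset.sum_comm]
  apply Finset.sum_congr rfl; intro j _
  apply Finset.sum_congr rfl; intro i _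
  ring

lemma XM_props (G : SimpleGraph (Fin n)) (w : Fin n → ℝ) (hw : ∀ i, 0 ≤ w i)
    (y : Finset (Fin n) → ℝ) (h0 : ∀ S, 0 ≤ y S)
    (hind : ∀ S, y S ≠ 0 → ∀ u ∈ S, ∀ v ∈ S, ¬ G.Adj u v)
    (hemp : y ∅ = 0) (hcov : ∀ v, cov y v ≤ 1) :
    (XM w y).IsSymm ∧ (XM w y).trace = (∑ S, y S) ∧
    (∀ i j, G.Adj i j → XM w y i j = 0) ∧ (XM w y).PosSemidef ∧
    (1 - XM w y).PosSemidef ∧ (sqrtRank1 w * (XM w y)).trace = ∑ v, w v * cov y v := by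
  classical
  have hne : ∀ S : Finset (Fin n), y S ≠ 0 → S.Nonempty := by
    intro S h
    rcases Finset.eq_empty_or_nonempty S with he | hne
    · exact absurd (he ▸ hemp) h
    · exact hne
  have hsymm : (XM w y).IsSymm := by
    ext i j
    simp only [XM, Matrix.transpose_apply, Matrix.of_apply]
    apply Finset.sum_congr rfl; intro S _; ring
  have hquadraw : ∀ x : Fin n → ℝ, x ⬝ᵥ (XM w y *ᵥ x) = ∑ S, y S * (∑ i, qvec w S i * x i)^2 :=
    XM_quad w y
  have hquad_nonneg : ∀ x : Fin n → ℝ, 0 ≤ x ⬝ᵥ (XM w y *ᵥ x) := by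
    intro x
    rw [hquadraw x]
    exact Finset.sum_nonneg fun S _ => mul_nonneg (h0 S) (sq_nonneg _)
  have hquad_le : ∀ x : Fin n → ℝ, x ⬝ᵥ (XM w y *ᵥ x) ≤ ∑ i, x i * x i := by
    intro x
    rw [hquadraw x]
    calc ∑ S, y S * (∑ i, qvec w S i * x i)^2
        ≤ ∑ S, y S * ∑ i ∈ S, (x i)^2 := by
          apply Finset.sum_le_sum
          intro S _
          by_cases h : y S = 0
          · rw [h, zero_mul, zero_mul]
          · exact mul_le_mul_of_nonneg_left (qvec_cs w hw S (hne S h) x) (h0 S)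
      _ = ∑ i, cov y i * (x i)^2 := swap_cov y _
      _ ≤ ∑ i, x i * x i := by
          apply Finset.sum_le_sum
          intro i _
          rw [← pow_two]
          calc cov y i * (x i)^2 ≤ 1 * (x i)^2 :=
                mul_le_mul_of_nonneg_right (hcov i) (sq_nonneg _)
            _ = (x i)^2 := one_mul _
  have hherm : (XM w y).IsHermitian := by
    rw [Matrix.IsHermitian, Matrix.conjTranspose]
    ext i j
    simp only [Matrix.map_apply, Matrix.transpose_apply, star_trivial]
    exact congrFun (congrFun hsymm i) j
  refine ⟨hsymm, ?_, ?_, ?_, ?_, ?_⟩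
  · rw [Matrix.trace]
    simp only [Matrix.diag_apply, XM, Matrix.of_apply]
    rw [Finset.sum_comm]
    apply Finset.sum_congr rfl
    intro S _
    by_cases h : y S = 0
    · simp [h]
    · rw [← Finset.mul_sum]
      have h2 : ∑ i, qvec w S i * qvec w S i = 1 := by
        have h3 := qvec_normsq w hw S (hne S h)
        rw [← qvec_sumsq_univ] at h3
        simpa [pow_two] using h3
      rw [h2, mul_one]
  · intro i j hadj
    show (∑ S, y S * (qvec w S i * qvec w S j)) = 0
    apply Finset.sum_eq_zero
    intro S _
    by_cases h : y S = 0
    · rw [h, zero_mul]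
    · by_cases hi : i ∈ S
      · by_cases hj : j ∈ S
        · exact absurd hadj (hind S h i hi j hj)
        · rw [qvec_support w S j hj, mul_zero, mul_zero]
      · rw [qvec_support w S i hi, zero_mul, mul_zero]
  · exact Matrix.PosSemidef.of_dotProduct_mulVec_nonneg hherm (fun x => by rw [star_id]; exact hquad_nonneg x)
  · refine Matrix.PosSemidef.of_dotProduct_mulVec_nonneg (Matrix.IsHermitian.sub Matrix.isHermitian_one hherm) fun x => ?_
    rw [star_id, Matrix.sub_mulVec, Matrix.one_mulVec, dotProduct_sub]
    have : x ⬝ᵥ x = ∑ i, x i * x i := rfl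
    rw [this, sub_nonneg]
    exact hquad_le x
  · have h1 : sqrtRank1 w = Matrix.of (fun i j => Real.sqrt (w i) * Real.sqrt (w j)) := rfl
    rw [h1, trace_rank1_mul, hquadraw]
    have h2 : ∀ S : Finset (Fin n), y S * (∑ i, qvec w S i * Real.sqrt (w i))^2
        = y S * ∑ i ∈ S, w i := by
      intro S
      by_cases h : y S = 0
      · rw [h, zero_mul, zero_mul]
      · congr 1
        rw [qvec_univ_eq]
        rw [show (∑ i ∈ S, qvec w S i * Real.sqrt (w i))
          = ∑ i ∈ S, Real.sqrt (w i) * qvec w S i from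
          Finset.sum_congr rfl fun i _ => mul_comm _ _]
        exact qvec_dot w hw S (hne S h)
    rw [Finset.sum_congr rfl fun S _ => h2 S, swap_cov]
    apply Finset.sum_congr rfl
    intro i _
    exact mul_comm _ _

lemma cov_smul (a : ℝ) (y : Finset (Fin n) → ℝ) (v : Fin n) :
    cov (fun S => a * y S) v = a * cov y v := by
  rw [cov, cov, Finset.mul_sum]

/-- Theorem 2 of the paper: for `k = χ_f(G)` and every nonnegative weight vector `w`,
`ϑ_k(G; w) ≥ wᵀ𝟙`. -/
theorem stmt9 {n : ℕ} (G : SimpleGraph (Fin n)) (w : Fin n → ℝ) (hw : ∀ i, 0 ≤ w i) :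
    (∑ i, w i) ≤ thetaSup G w (fracChrom G) := by
  classical
  set k := fracChrom G with hkdef
  set A := {r : ℝ | ∃ X : Matrix (Fin n) (Fin n) ℝ, X.IsSymm ∧ X.trace = k ∧
    (∀ i j, G.Adj i j → X i j = 0) ∧ X.PosSemidef ∧ (1 - X).PosSemidef ∧
    r = (sqrtRank1 w * X).trace} with hAdef
  set F := {t : ℝ | ∃ y : Finset (Fin n) → ℝ, (∀ S, 0 ≤ y S) ∧
    (∀ S, y S ≠ 0 → ∀ u ∈ S, ∀ v ∈ S, ¬ G.Adj u v) ∧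
    (∀ v, 1 ≤ ∑ S ∈ Finset.univ.filter (fun S => v ∈ S), y S) ∧
    t = ∑ S, y S} with hFdef
  have hthet : thetaSup G w k = sSup A := rfl
  have hkF : k = sInf F := rfl
  have hw0 : (0:ℝ) ≤ ∑ i, w i := Finset.sum_nonneg fun i _ => hw i
  have hsq : (fun i => Real.sqrt (w i)) ⬝ᵥ (fun i => Real.sqrt (w i)) = ∑ i, w i := by
    rw [dotProduct]
    apply Finset.sum_congr rfl
    intro i _
    exact Real.mul_self_sqrt (hw i)
  have hAub : ∀ r ∈ A, r ≤ ∑ i, w i := by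
    rintro r ⟨X, _, _, _, _, hX1, hr⟩
    have h1 : r = (fun i => Real.sqrt (w i)) ⬝ᵥ (X *ᵥ fun i => Real.sqrt (w i)) := by
      rw [hr]; exact trace_rank1_mul _ X
    have h2 := hX1.dotProduct_mulVec_nonneg (fun i => Real.sqrt (w i))
    rw [star_id, Matrix.sub_mulVec, Matrix.one_mulVec, dotProduct_sub, sub_nonneg, hsq] at h2
    rw [h1]; exact h2
  have hbdd : BddAbove A := ⟨∑ i, w i, hAub⟩
  rcases Nat.eq_zero_or_pos n with hn | hn
  · subst hn
    have hwz : (∑ i : Fin 0, w i) = 0 := by simp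
    have hF0 : F = Set.Ici 0 := by
      ext t
      constructor
      · rintro ⟨y, h0, _, _, ht⟩
        rw [ht]
        exact Finset.sum_nonneg fun S _ => h0 S
      · intro ht
        refine ⟨fun _ => t, fun _ => ht, fun S _ u _ => u.elim0, fun v => v.elim0, ?_⟩
        simp
    have hk0 : k = 0 := by rw [hkF, hF0, csInf_Ici]
    have h0A : (0:ℝ) ∈ A := by
      refine ⟨0, ?_, ?_, ?_, ?_, ?_, ?_⟩
      · ext i j; exact i.elim0
      · rw [Matrix.trace_zero, hk0]
      · intro i j _; rfl
      · exact Matrix.PosSemidef.zero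
      · rw [sub_zero]; exact Matrix.PosSemidef.one
      · rw [mul_zero, Matrix.trace_zero]
    rw [hwz, hthet]
    exact le_csSup hbdd h0A
  · have hFne : F.Nonempty := by
      refine ⟨∑ S : Finset (Fin n), (if S.card = 1 then (1:ℝ) else 0),
        fun S => if S.card = 1 then 1 else 0, ?_, ?_, ?_, rfl⟩
      · intro S
        by_cases h : S.card = 1 <;> simp [h]
      · intro S hS u hu v hv
        by_cases h : S.card = 1
        · obtain ⟨a, ha⟩ := Finset.card_eq_one.mp h
          rw [ha, Finset.mem_singleton] at hu hv
          rw [hu, hv]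
          exact G.irrefl
        · simp only [h, if_false] at hS
          exact absurd rfl hS
      · intro v
        have hmem : {v} ∈ Finset.univ.filter (fun S : Finset (Fin n) => v ∈ S) := by
          simp
        have h1 := Finset.single_le_sum
          (f := fun S : Finset (Fin n) => if S.card = 1 then (1:ℝ) else 0)
          (fun S _ => by by_cases h : S.card = 1 <;> simp [h]) hmem
        simpa using h1
    have hFlb : ∀ t ∈ F, (1:ℝ) ≤ t := by
      rintro t ⟨y, h0, _, hcv, ht⟩
      calc (1:ℝ) ≤ ∑ S ∈ Finset.univ.filter (fun S => (⟨0, hn⟩ : Fin n) ∈ S), y S :=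
            hcv ⟨0, hn⟩
        _ ≤ ∑ S, y S := Finset.sum_le_sum_of_subset_of_nonneg (Finset.filter_subset _ _)
            (fun S _ _ => h0 S)
        _ = t := ht.symm
    have hFbdd : BddBelow F := ⟨1, hFlb⟩
    have hk1 : (1:ℝ) ≤ k := by
      rw [hkF]
      exact le_csInf hFne hFlb
    have hk0 : (0:ℝ) < k := lt_of_lt_of_le one_pos hk1
    have hmem : ∀ t ∈ F, ∃ r ∈ A, k / t * ∑ i, w i ≤ r := by
      rintro t ⟨y, h0, hind, hcv, ht⟩
      obtain ⟨y', h0', hind', hcov', hemp', htot'⟩ := equalize G y h0 hind (fun u => hcv u)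
      set t' := ∑ S, y' S with ht'
      have ht'F : t' ∈ F := ⟨y', h0', hind', fun v => le_of_eq (hcov' v).symm, rfl⟩
      have ht'1 : (1:ℝ) ≤ t' := hFlb t' ht'F
      have ht'0 : (0:ℝ) < t' := lt_of_lt_of_le one_pos ht'1
      have hkt' : k ≤ t' := by rw [hkF]; exact csInf_le hFbdd ht'F
      set α := k / t' with hα
      have hα0 : 0 < α := div_pos hk0 ht'0
      have hα1 : α ≤ 1 := by rw [hα, div_le_one ht'0]; exact hkt'
      set y2 : Finset (Fin n) → ℝ := fun S => α * y' S with hy2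
      have h02 : ∀ S, 0 ≤ y2 S := fun S => mul_nonneg (le_of_lt hα0) (h0' S)
      have hind2 : ∀ S, y2 S ≠ 0 → ∀ u ∈ S, ∀ v ∈ S, ¬ G.Adj u v := by
        intro S hS u hu v hv
        apply hind' S _ u hu v hv
        intro h
        exact hS (by rw [hy2]; dsimp only; rw [h, mul_zero])
      have hemp2 : y2 ∅ = 0 := by rw [hy2]; dsimp only; rw [hemp', mul_zero]
      have hcov2 : ∀ v, cov y2 v ≤ 1 := by
        intro v
        rw [hy2, cov_smul, hcov' v, mul_one]
        exact hα1
      obtain ⟨hXsymm, hXtr, hXedge, hXpsd, hXpsd1, hXobj⟩ :=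
        XM_props G w hw y2 h02 hind2 hemp2 hcov2
      refine ⟨(sqrtRank1 w * XM w y2).trace,
        ⟨XM w y2, hXsymm, ?_, hXedge, hXpsd, hXpsd1, rfl⟩, ?_⟩
      · rw [hXtr]
        have h3 : ∑ S, y2 S = α * t' := by rw [hy2, ht', Finset.mul_sum]
        rw [h3, hα, div_mul_cancel₀ _ (ne_of_gt ht'0)]
      · rw [hXobj]
        have h4 : ∑ v, w v * cov y2 v = α * ∑ i, w i := by
          rw [Finset.mul_sum]
          apply Finset.sum_congr rfl
          intro v _
          rw [hy2, cov_smul, hcov' v, mul_one, mul_comm]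
        rw [h4]
        apply mul_le_mul_of_nonneg_right _ hw0
        rw [hα]
        have htt' : t' ≤ t := le_of_le_of_eq htot' ht.symm
        exact div_le_div_of_nonneg_left (le_of_lt hk0) ht'0 htt'
    have hAne : A.Nonempty := by
      obtain ⟨t0, ht0⟩ := hFne
      obtain ⟨r, hrA, _⟩ := hmem t0 ht0
      exact ⟨r, hrA⟩
    rw [hthet, le_csSup_iff hbdd hAne]
    intro b hb
    obtain ⟨t0, ht0F⟩ := hFne
    obtain ⟨r0, hr0A, hr0⟩ := hmem t0 ht0F
    have ht00 : (0:ℝ) < t0 := lt_of_lt_of_le one_pos (hFlb t0 ht0F)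
    rcases eq_or_lt_of_le hw0 with hz | hpos
    · rw [← hz]
      calc (0:ℝ) ≤ k / t0 * ∑ i, w i := mul_nonneg (le_of_lt (div_pos hk0 ht00)) hw0
        _ ≤ r0 := hr0
        _ ≤ b := hb hr0A
    · have hb0 : (0:ℝ) < b := by
        calc (0:ℝ) < k / t0 * ∑ i, w i := mul_pos (div_pos hk0 ht00) hpos
          _ ≤ r0 := hr0
          _ ≤ b := hb hr0A
      have hstep : ∀ t ∈ F, k * (∑ i, w i) / b ≤ t := by
        intro t htF
        have htpos : (0:ℝ) < t := lt_of_lt_of_le one_pos (hFlb t htF)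
        obtain ⟨r, hrA, hr⟩ := hmem t htF
        have h1 : k / t * ∑ i, w i ≤ b := le_trans hr (hb hrA)
        rw [div_mul_eq_mul_div, div_le_iff₀ htpos] at h1
        rw [div_le_iff₀ hb0]
        calc k * ∑ i, w i ≤ b * t := h1
          _ = t * b := mul_comm b t
      have h2 : k * (∑ i, w i) / b ≤ k := by
        rw [hkF]
        exact le_csInf ⟨t0, ht0F⟩ hstep
      rw [div_le_iff₀ hb0] at h2
      exact le_of_mul_le_mul_left h2 hk0
end

section
/- Suppose m = h(G) − 1 ≥ 1 and there exists a symmetric matrix Z with Zᵢⱼ = 0 for all ij ∉ E(G), having a nonnegative top eigenvector v ≥ 0 for λ₁(Z), such that λ₁(Z) + Σ_{i=1}^{m−1} λ_{n+1−i}(Z) > 0. Let w ≥ 0 be such that √w is a scalar multiple of v scaled so that wᵀ𝟙 − λ₁(Z) ≥ −λₙ(Z). Then ϑ_m(G;w) ≤ Σ_{i=1}^{m} λᵢ(√w √wᵀ − Z) = wᵀ𝟙 − λ₁(Z) − Σ_{i=1}^{m−1} λ_{n+1−i}(Z) < wᵀ𝟙. -/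
open Matrix Polynomial Finset


/-- `h(G)`: the smallest integer `m ≥ 1` such that for every symmetric matrix `Z`
supported on the edges of `G`, `λ₁(Z) + λₙ(Z) + ⋯ + λₙ₋ₘ₊₂(Z) ≤ 0`. -/
noncomputable def hParam {n : ℕ} (G : SimpleGraph (Fin n)) : ℕ :=
  sInf {m : ℕ | 1 ≤ m ∧ ∀ Z : Matrix (Fin n) (Fin n) ℝ, Z.IsSymm →
    (∀ i j, ¬ G.Adj i j → Z i j = 0) →
    eigDesc Z 0 + ∑ i ∈ Finset.range (m - 1), eigDesc Z (n - 1 - i) ≤ 0}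

/-- The weighted Narasimhan–Manber parameter `ϑ_k(G; w)` in its eigenvalue-sum
(primal) form: the infimum of the sum of the `k` largest eigenvalues of
`√w √wᵀ + Y` over symmetric `Y` supported on the edges of `G`. -/
noncomputable def thetaInf {n : ℕ} (G : SimpleGraph (Fin n)) (w : Fin n → ℝ) (k : ℕ) : ℝ :=
  sInf {r : ℝ | ∃ Y : Matrix (Fin n) (Fin n) ℝ, Y.IsSymm ∧
    (∀ i j, ¬ G.Adj i j → Y i j = 0) ∧
    r = ∑ i ∈ Finset.range k, eigDesc (sqrtRank1 w + Y) i}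

lemma symm_herm {n : ℕ} {A : Matrix (Fin n) (Fin n) ℝ} (h : A.IsSymm) : A.IsHermitian := by
  rwa [Matrix.IsHermitian, conjTranspose_eq_transpose_of_trivial]

-- det of x•1 - A for hermitian A

lemma herm_det_sub {n : ℕ} {A : Matrix (Fin n) (Fin n) ℝ} (hA : A.IsHermitian) (x : ℝ) :
    (x • (1 : Matrix (Fin n) (Fin n) ℝ) - A).det = ∏ i, (x - hA.eigenvalues i) := by
  set U : Matrix (Fin n) (Fin n) ℝ := (hA.eigenvectorUnitary : Matrix (Fin n) (Fin n) ℝ) with hUdef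
  have hU : U * star U = 1 := (Matrix.mem_unitaryGroup_iff).mp hA.eigenvectorUnitary.2
  have hU' : star U * U = 1 := (Matrix.mem_unitaryGroup_iff').mp hA.eigenvectorUnitary.2
  have h1 : x • (1 : Matrix (Fin n) (Fin n) ℝ) - A
      = U * (x • (1 : Matrix (Fin n) (Fin n) ℝ) - diagonal (RCLike.ofReal ∘ hA.eigenvalues)) * star U := by
    rw [Matrix.mul_sub, Matrix.sub_mul]
    congr 1
    · rw [Matrix.mul_smul, Matrix.mul_one, Matrix.smul_mul, hU]
    · exact hA.spectral_theorem
  rw [h1, Matrix.det_mul, Matrix.det_mul, mul_comm, ← mul_assoc, ← Matrix.det_mul, hU',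
    Matrix.det_one, one_mul]
  have : x • (1 : Matrix (Fin n) (Fin n) ℝ) - diagonal (RCLike.ofReal ∘ hA.eigenvalues)
      = diagonal (fun i => x - hA.eigenvalues i) := by
    rw [smul_one_eq_diagonal, diagonal_sub]
    rfl
  rw [this, det_diagonal]

lemma herm_det_add {n : ℕ} {A : Matrix (Fin n) (Fin n) ℝ} (hA : A.IsHermitian) (x : ℝ) :
    (x • (1 : Matrix (Fin n) (Fin n) ℝ) + A).det = ∏ i, (x + hA.eigenvalues i) := by
  set U : Matrix (Fin n) (Fin n) ℝ := (hA.eigenvectorUnitary : Matrix (Fin n) (Fin n) ℝ) with hUdef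
  have hU : U * star U = 1 := (Matrix.mem_unitaryGroup_iff).mp hA.eigenvectorUnitary.2
  have hU' : star U * U = 1 := (Matrix.mem_unitaryGroup_iff').mp hA.eigenvectorUnitary.2
  have h1 : x • (1 : Matrix (Fin n) (Fin n) ℝ) + A
      = U * (x • (1 : Matrix (Fin n) (Fin n) ℝ) + diagonal (RCLike.ofReal ∘ hA.eigenvalues)) * star U := by
    rw [Matrix.mul_add, Matrix.add_mul]
    congr 1
    · rw [Matrix.mul_smul, Matrix.mul_one, Matrix.smul_mul, hU]
    · exact hA.spectral_theorem
  rw [h1, Matrix.det_mul, Matrix.det_mul, mul_comm, ← mul_assoc, ← Matrix.det_mul, hU',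
    Matrix.det_one, one_mul]
  have : x • (1 : Matrix (Fin n) (Fin n) ℝ) + diagonal (RCLike.ofReal ∘ hA.eigenvalues)
      = diagonal (fun i => x + hA.eigenvalues i) := by
    rw [smul_one_eq_diagonal, diagonal_add]
    rfl
  rw [this, det_diagonal]

lemma herm_trace {n : ℕ} {A : Matrix (Fin n) (Fin n) ℝ} (hA : A.IsHermitian) :
    A.trace = ∑ i, hA.eigenvalues i := by
  simpa using hA.trace_eq_sum_eigenvalues

lemma eigDesc_eq {n : ℕ} {A : Matrix (Fin n) (Fin n) ℝ} (hA : A.IsHermitian) {i : ℕ} (h : i < n) :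
    eigDesc A i = hA.eigenvalues (Tuple.sort (fun j => -hA.eigenvalues j) ⟨i, h⟩) := by
  rw [eigDesc, dif_pos (⟨h, hA⟩ : i < n ∧ A.IsHermitian)]

lemma eigDesc_anti {n : ℕ} {A : Matrix (Fin n) (Fin n) ℝ} (hA : A.IsHermitian) {i j : ℕ}
    (hij : i ≤ j) (hj : j < n) : eigDesc A j ≤ eigDesc A i := by
  have hi : i < n := lt_of_le_of_lt hij hj
  rw [eigDesc_eq hA hi, eigDesc_eq hA hj]
  have h2 := Tuple.monotone_sort (fun j : Fin n => -hA.eigenvalues j)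
    (a := ⟨i, hi⟩) (b := ⟨j, hj⟩) hij
  simpa using h2

lemma eigDesc_fun_anti {n : ℕ} {A : Matrix (Fin n) (Fin n) ℝ} (hA : A.IsHermitian) :
    Antitone (fun j : Fin n => eigDesc A (j : ℕ)) := by
  intro a b hab
  exact eigDesc_anti hA (by exact_mod_cast hab) b.2

lemma eigDesc_multiset {n : ℕ} {A : Matrix (Fin n) (Fin n) ℝ} (hA : A.IsHermitian) :
    Multiset.map (fun j : Fin n => eigDesc A (j : ℕ)) Finset.univ.val
      = Multiset.map hA.eigenvalues Finset.univ.val := by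
  have h1 : ∀ j : Fin n, eigDesc A (j : ℕ)
      = (hA.eigenvalues ∘ (Tuple.sort (fun j : Fin n => -hA.eigenvalues j))) j := fun j => by
    rw [eigDesc_eq hA j.2]; rfl
  rw [Multiset.map_congr rfl (fun x _ => h1 x), ← Multiset.map_map]
  congr 1
  have := congrArg Finset.val
    (Finset.map_univ_equiv (Tuple.sort (fun j : Fin n => -hA.eigenvalues j)))
  simpa [Finset.map_val] using this

lemma antitone_tuple_eq {n : ℕ} {f g : Fin n → ℝ} (hf : Antitone f) (hg : Antitone g)
    (h : Multiset.map f Finset.univ.val = Multiset.map g Finset.univ.val) : f = g := by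
  have hco : (↑(List.ofFn f) : Multiset ℝ) = ↑(List.ofFn g) := by
    rwa [← Fin.univ_val_map, ← Fin.univ_val_map]
  have hperm := Multiset.coe_eq_coe.mp hco
  have hsf : List.Pairwise (· ≥ ·) (List.ofFn f) :=
    List.pairwise_ofFn.mpr fun i j hij => hf (le_of_lt hij)
  have hsg : List.Pairwise (· ≥ ·) (List.ofFn g) :=
    List.pairwise_ofFn.mpr fun i j hij => hg (le_of_lt hij)
  exact List.ofFn_injective (hperm.eq_of_pairwise' hsf hsg)

lemma eigDesc_of_antitone {n : ℕ} {A : Matrix (Fin n) (Fin n) ℝ} (hA : A.IsHermitian)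
    {f : Fin n → ℝ} (hf : Antitone f)
    (h : Multiset.map f Finset.univ.val = Multiset.map hA.eigenvalues Finset.univ.val) :
    ∀ j : Fin n, eigDesc A (j : ℕ) = f j := by
  have := antitone_tuple_eq (eigDesc_fun_anti hA) hf ((eigDesc_multiset hA).trans h.symm)
  exact fun j => congrFun this j

lemma eigDesc_sum_univ {n : ℕ} {A : Matrix (Fin n) (Fin n) ℝ} (hA : A.IsHermitian) :
    ∑ i ∈ Finset.range n, eigDesc A i = A.trace := by
  rw [← Fin.sum_univ_eq_sum_range]
  have h1 : ∑ j : Fin n, eigDesc A (j : ℕ) = ∑ j : Fin n, hA.eigenvalues j := by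
    rw [Finset.sum, Finset.sum, eigDesc_multiset hA]
  rw [h1, ← herm_trace hA]

lemma key_det {n : ℕ}
    (Z : Matrix (Fin n) (Fin n) ℝ) (hZ : Z.IsHermitian) (hZsymm : Z.IsSymm)
    (w : Fin n → ℝ) (hw : ∀ i, 0 ≤ w i)
    (hA : (sqrtRank1 w - Z).IsHermitian)
    (μ : ℝ)
    (hZc : Z *ᵥ (fun i => Real.sqrt (w i)) = μ • (fun i => Real.sqrt (w i)))
    (x : ℝ) (hxμ : x + μ ≠ 0) (hxν : ∀ i, x + hZ.eigenvalues i ≠ 0) :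
    (∏ i, (x - hA.eigenvalues i)) * (x + μ)
      = (∏ i, (x + hZ.eigenvalues i)) * (x + μ - ∑ i, w i) := by
  set c : Fin n → ℝ := fun i => Real.sqrt (w i) with hcdef
  have hcc : c ⬝ᵥ c = ∑ i, w i := by
    simp only [dotProduct, hcdef]
    exact Finset.sum_congr rfl fun i _ => Real.mul_self_sqrt (hw i)
  set B : Matrix (Fin n) (Fin n) ℝ := x • (1 : Matrix (Fin n) (Fin n) ℝ) + Z with hBdef
  have hdetB : B.det = ∏ i, (x + hZ.eigenvalues i) := herm_det_add hZ x
  have hunit : IsUnit B.det := by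
    rw [hdetB]
    exact (Finset.prod_ne_zero_iff.mpr fun i _ => hxν i).isUnit
  have hmat : x • (1 : Matrix (Fin n) (Fin n) ℝ) - (sqrtRank1 w - Z)
      = B + replicateCol (Fin 1) (-c) * replicateRow (Fin 1) c := by
    ext i j
    simp [Matrix.mul_apply, Matrix.replicateCol_apply, Matrix.replicateRow_apply, sqrtRank1, hBdef,
      Matrix.add_apply, Matrix.sub_apply, Matrix.smul_apply, Matrix.one_apply, hcdef]
    ring
  have hBc : B *ᵥ c = (x + μ) • c := by
    rw [hBdef, Matrix.add_mulVec, Matrix.smul_mulVec, Matrix.one_mulVec, hZc, add_smul]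
  have hinv : B⁻¹ *ᵥ c = (x + μ)⁻¹ • c := by
    have h2 : B⁻¹ *ᵥ (B *ᵥ c) = B⁻¹ *ᵥ ((x + μ) • c) := by rw [hBc]
    rw [Matrix.mulVec_mulVec, Matrix.nonsing_inv_mul _ hunit, Matrix.one_mulVec,
      Matrix.mulVec_smul] at h2
    have h4 := congrArg (fun u => (x + μ)⁻¹ • u) h2
    simp only [inv_smul_smul₀ hxμ] at h4
    exact h4.symm
  have hBsymm : (B⁻¹)ᵀ = B⁻¹ := by
    rw [Matrix.transpose_nonsing_inv]
    congr 1
    rw [hBdef, Matrix.transpose_add, Matrix.transpose_smul, Matrix.transpose_one, hZsymm]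
  have hentry : (1 + replicateRow (Fin 1) c * B⁻¹ * replicateCol (Fin 1) (-c)).det
      = 1 - (x + μ)⁻¹ * ∑ i, w i := by
    rw [Matrix.det_fin_one]
    have h3 : replicateRow (Fin 1) c * B⁻¹ = replicateRow (Fin 1) (B⁻¹ *ᵥ c) := by
      rw [← Matrix.replicateRow_vecMul, ← Matrix.mulVec_transpose, hBsymm]
    rw [Matrix.add_apply, h3, Matrix.replicateRow_mul_replicateCol_apply, hinv, Matrix.one_apply_eq,
      dotProduct_neg, smul_dotProduct, hcc, smul_eq_mul, ← sub_eq_add_neg]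
  have hfinal : (∏ i, (x - hA.eigenvalues i)) = (∏ i, (x + hZ.eigenvalues i)) *
      (1 - (x + μ)⁻¹ * ∑ i, w i) := by
    rw [← herm_det_sub hA x, hmat]
    erw [Matrix.det_add_replicateCol_mul_replicateRow (ι := Fin 1) hunit]
    rw [hdetB]
    exact congrArg (fun t => (∏ i, (x + hZ.eigenvalues i)) * t) hentry
  rw [hfinal]
  field_simp

lemma main_eq {n : ℕ} (m : ℕ) (hm1 : 1 ≤ m) (hmn : m ≤ n)
    (Z : Matrix (Fin n) (Fin n) ℝ) (hZsymm : Z.IsSymm)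
    (v : Fin n → ℝ)
    (hveig : Z.mulVec v = eigDesc Z 0 • v)
    (w : Fin n → ℝ) (hw : ∀ i, 0 ≤ w i)
    (hwv : ∃ c : ℝ, (fun i => Real.sqrt (w i)) = c • v)
    (hscale : -(eigDesc Z (n - 1)) ≤ (∑ i, w i) - eigDesc Z 0) :
    ∑ i ∈ Finset.range m, eigDesc (sqrtRank1 w - Z) i =
      (∑ i, w i) - eigDesc Z 0 - ∑ i ∈ Finset.range (m - 1), eigDesc Z (n - 1 - i) := by
  have hn : 0 < n := lt_of_lt_of_le hm1 hmn
  have hZ : Z.IsHermitian := symm_herm hZsymm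
  have hAsymm : (sqrtRank1 w - Z).IsSymm := by
    apply Matrix.IsSymm.sub _ hZsymm
    show (sqrtRank1 w)ᵀ = sqrtRank1 w
    ext i j
    simp [sqrtRank1, Matrix.transpose_apply, mul_comm]
  have hA : (sqrtRank1 w - Z).IsHermitian := symm_herm hAsymm
  set μ : ℝ := eigDesc Z 0 with hμdef
  obtain ⟨cc, hcc'⟩ := hwv
  have hZc : Z *ᵥ (fun i => Real.sqrt (w i)) = μ • (fun i => Real.sqrt (w i)) := by
    rw [hcc', Matrix.mulVec_smul, hveig, smul_comm]
  set bad : Finset ℝ := Finset.image (fun i => -hZ.eigenvalues i) Finset.univ ∪ {-μ} with hbad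
  set MA : Multiset ℝ := Multiset.map hA.eigenvalues Finset.univ.val with hMAdef
  set MZ : Multiset ℝ := Multiset.map (fun i => -hZ.eigenvalues i) Finset.univ.val with hMZdef
  have hPQ : (Multiset.map (fun r => X - C r) ((-μ) ::ₘ MA)).prod
      = (Multiset.map (fun r => X - C r) (((∑ i, w i) - μ) ::ₘ MZ)).prod := by
    apply eq_of_infinite_eval_eq
    apply Set.Infinite.mono (s := (↑bad : Set ℝ)ᶜ)
    · intro x hx
      have hxμ : x + μ ≠ 0 := by
        intro h
        apply hx
        simp only [hbad, Finset.coe_union, Set.mem_union, Finset.coe_image, Set.mem_image,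
          Finset.coe_singleton, Set.mem_singleton_iff]
        right; linarith
      have hxν : ∀ i, x + hZ.eigenvalues i ≠ 0 := by
        intro i h
        apply hx
        simp only [hbad, Finset.coe_union, Set.mem_union, Finset.coe_image, Set.mem_image,
          Finset.coe_singleton, Set.mem_singleton_iff]
        left; exact ⟨i, Finset.mem_coe.mpr (Finset.mem_univ i), by linarith⟩
      have hkey := key_det Z hZ hZsymm w hw hA μ hZc x hxμ hxν
      show eval x _ = eval x _
      rw [eval_multiset_prod, eval_multiset_prod, Multiset.map_map, Multiset.map_map,
        Multiset.map_cons, Multiset.map_cons, Multiset.prod_cons, Multiset.prod_cons]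
      have e1 : (Multiset.map ((fun p => eval x p) ∘ fun r => X - C r) MA).prod
          = ∏ i, (x - hA.eigenvalues i) := by
        rw [hMAdef, Multiset.map_map]
        simp only [Function.comp_apply, eval_sub, eval_X, eval_C]
        rfl
      have e2 : (Multiset.map ((fun p => eval x p) ∘ fun r => X - C r) MZ).prod
          = ∏ i, (x + hZ.eigenvalues i) := by
        rw [hMZdef, Multiset.map_map]
        simp only [Function.comp_apply, eval_sub, eval_X, eval_C, sub_neg_eq_add]
        rfl
      simp only [Function.comp_apply, eval_sub, eval_X, eval_C] at e1 e2 ⊢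
      rw [e1, e2]
      linear_combination hkey
    · exact Set.Finite.infinite_compl (bad.finite_toSet)
  have hroots := congrArg Polynomial.roots hPQ
  rw [roots_multiset_prod_X_sub_C, roots_multiset_prod_X_sub_C] at hroots
  set z0 : Fin n := ⟨0, hn⟩ with hz0
  have huniv : Finset.univ.val = z0 ::ₘ Finset.univ.val.erase z0 :=
    (Multiset.cons_erase (Finset.mem_val.mpr (Finset.mem_univ z0))).symm
  set M' : Multiset ℝ :=
    Multiset.map (fun j : Fin n => -(eigDesc Z (j : ℕ))) (Finset.univ.val.erase z0) with hM'def
  have hMZ : MZ = (-μ) ::ₘ M' := by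
    have h1 : MZ = Multiset.map (fun j : Fin n => -(eigDesc Z (j : ℕ))) Finset.univ.val := by
      rw [hMZdef,
        show (fun i : Fin n => -hZ.eigenvalues i) = (fun r : ℝ => -r) ∘ hZ.eigenvalues from rfl,
        ← Multiset.map_map, ← eigDesc_multiset hZ, Multiset.map_map]
      rfl
    rw [h1]
    conv_lhs => rw [huniv]
    rw [Multiset.map_cons]
  rw [hMZ, Multiset.cons_swap] at hroots
  have hMA : MA = ((∑ i, w i) - μ) ::ₘ M' := by
    have := hroots
    rwa [Multiset.cons_inj_right] at this
  set f : Fin n → ℝ :=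
    fun i => if (i : ℕ) = 0 then (∑ i, w i) - μ else -(eigDesc Z (n - (i : ℕ))) with hfdef
  have hmod : ∀ k : ℕ, k < n → (n - k) % n = if k = 0 then 0 else n - k := by
    intro k hk
    rcases Nat.eq_zero_or_pos k with h | h
    · simp [h, Nat.mod_self]
    · rw [if_neg (by omega), Nat.mod_eq_of_lt (by omega)]
  have hginv : Function.Involutive
      (fun i : Fin n => (⟨(n - (i : ℕ)) % n, Nat.mod_lt _ hn⟩ : Fin n)) := by
    intro i
    apply Fin.ext
    show (n - (n - (i : ℕ)) % n) % n = (i : ℕ)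
    have hi := i.isLt
    rw [hmod (i : ℕ) hi]
    by_cases h : (i : ℕ) = 0
    · rw [if_pos h, Nat.sub_zero, Nat.mod_self, h]
    · rw [if_neg h, hmod (n - (i : ℕ)) (by omega), if_neg (by omega)]
      omega
  set σ : Equiv.Perm (Fin n) := Function.Involutive.toPerm _ hginv with hσdef
  have hσcoe : ⇑σ = (fun i : Fin n => (⟨(n - (i : ℕ)) % n, Nat.mod_lt _ hn⟩ : Fin n)) :=
    hginv.coe_toPerm
  have hσz0 : σ z0 = z0 := by
    rw [hσcoe]
    apply Fin.ext
    show (n - ((z0 : Fin n) : ℕ)) % n = 0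
    rw [show ((z0 : Fin n) : ℕ) = 0 from rfl, Nat.sub_zero, Nat.mod_self]
  have hσval : Multiset.map (⇑σ) Finset.univ.val = Finset.univ.val := by
    have := congrArg Finset.val (Finset.map_univ_equiv σ)
    simpa [Finset.map_val] using this
  have herase : Multiset.map (⇑σ) (Finset.univ.val.erase z0) = Finset.univ.val.erase z0 := by
    rw [Multiset.map_erase _ σ.injective, hσval, hσz0]
  have hM' : Multiset.map f (Finset.univ.val.erase z0) = M' := by
    rw [hM'def]
    conv_rhs => rw [← herase, Multiset.map_map]
    apply Multiset.map_congr rfl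
    intro x hx
    have hxne : x ≠ z0 := by
      have hx' : x ∈ Finset.univ.erase z0 := by
        rw [Finset.mem_def, Finset.erase_val]
        exact hx
      exact (Finset.mem_erase.mp hx').1
    have hx0 : (x : ℕ) ≠ 0 := fun h => hxne (Fin.ext h)
    show f x = -(eigDesc Z ((σ x : Fin n) : ℕ))
    have hσx : σ x = (⟨n - (x : ℕ), by have := x.isLt; omega⟩ : Fin n) := by
      rw [hσcoe]
      apply Fin.ext
      show (n - (x : ℕ)) % n = n - (x : ℕ)
      rw [hmod (x : ℕ) x.isLt, if_neg hx0]
    rw [hσx, hfdef]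
    simp only [if_neg hx0]
  have hfmulti : Multiset.map f Finset.univ.val = Multiset.map hA.eigenvalues Finset.univ.val := by
    conv_lhs => rw [huniv, Multiset.map_cons]
    rw [hM', ← hMAdef, hMA]
    congr 1
  have hf_anti : Antitone f := by
    intro a b hab
    have hab' : (a : ℕ) ≤ (b : ℕ) := hab
    by_cases hb : (b : ℕ) = 0
    · have ha : (a : ℕ) = 0 := by omega
      simp [hfdef, ha, hb]
    · by_cases ha : (a : ℕ) = 0
      · show f b ≤ f a
        rw [hfdef]
        simp only [ha, if_pos, hb, if_neg, ite_true, ite_false]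
        have h1 : eigDesc Z (n - 1) ≤ eigDesc Z (n - (b : ℕ)) := by
          apply eigDesc_anti hZ
          · omega
          · omega
        linarith
      · show f b ≤ f a
        rw [hfdef]
        simp only [ha, hb, ite_false]
        have h1 : eigDesc Z (n - (a : ℕ)) ≤ eigDesc Z (n - (b : ℕ)) := by
          apply eigDesc_anti hZ
          · omega
          · omega
        linarith
  have hfd := eigDesc_of_antitone hA hf_anti hfmulti
  obtain ⟨m', rfl⟩ : ∃ m', m = m' + 1 := ⟨m - 1, (Nat.succ_pred_eq_of_pos hm1).symm⟩
  rw [Finset.sum_range_succ']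
  have h0 : eigDesc (sqrtRank1 w - Z) 0 = (∑ i, w i) - μ := by
    have h := hfd z0
    rw [show ((z0 : Fin n) : ℕ) = 0 from rfl] at h
    rw [h, hfdef]
    simp [hz0]
  have hterm : ∀ i ∈ Finset.range m', eigDesc (sqrtRank1 w - Z) (i + 1)
      = -(eigDesc Z (n - 1 - i)) := by
    intro i hi
    have hi' : i + 1 < n := by
      have := Finset.mem_range.mp hi
      omega
    have h := hfd ⟨i + 1, hi'⟩
    rw [show (((⟨i + 1, hi'⟩ : Fin n) : Fin n) : ℕ) = i + 1 from rfl] at h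
    rw [h, hfdef]
    simp only [Nat.succ_ne_zero, ite_false]
    congr 2
    omega
  rw [Finset.sum_congr rfl hterm, h0, Finset.sum_neg_distrib]
  simp only [Nat.add_sub_cancel]
  ring

lemma sum_eigDesc_nonneg {n : ℕ} {A : Matrix (Fin n) (Fin n) ℝ} (hA : A.IsHermitian)
    {m : ℕ} (hmn : m ≤ n) (htr : 0 ≤ A.trace) : 0 ≤ ∑ i ∈ Finset.range m, eigDesc A i := by
  rcases eq_or_lt_of_le hmn with h | h
  · subst h
    rw [eigDesc_sum_univ hA]
    exact htr
  · by_cases hsgn : 0 ≤ eigDesc A m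
    · apply Finset.sum_nonneg
      intro i hi
      exact le_trans hsgn (eigDesc_anti hA (le_of_lt (Finset.mem_range.mp hi)) h)
    · push_neg at hsgn
      have hsplit : ∑ i ∈ Finset.range m, eigDesc A i + ∑ i ∈ Finset.Ico m n, eigDesc A i
          = ∑ i ∈ Finset.range n, eigDesc A i := by
        rw [Finset.range_eq_Ico, Finset.range_eq_Ico]
        exact Finset.sum_Ico_consecutive (fun i => eigDesc A i) (Nat.zero_le m) (le_of_lt h)
      have h2 : ∑ i ∈ Finset.Ico m n, eigDesc A i ≤ 0 := by
        apply Finset.sum_nonpos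
        intro i hi
        obtain ⟨h3, h4⟩ := Finset.mem_Ico.mp hi
        exact le_trans (eigDesc_anti hA h3 h4) (le_of_lt hsgn)
      have h5 := eigDesc_sum_univ hA
      linarith

lemma sqrtRank1_symm {n : ℕ} (w : Fin n → ℝ) : (sqrtRank1 w).IsSymm := by
  show (sqrtRank1 w)ᵀ = sqrtRank1 w
  ext i j
  simp [sqrtRank1, Matrix.transpose_apply, mul_comm]

lemma theta_le {n : ℕ} (G : SimpleGraph (Fin n)) (w : Fin n → ℝ) (hw : ∀ i, 0 ≤ w i)
    (m : ℕ) (hmn : m ≤ n)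
    (Z : Matrix (Fin n) (Fin n) ℝ) (hZsymm : Z.IsSymm)
    (hZsupp : ∀ i j, ¬ G.Adj i j → Z i j = 0) :
    thetaInf G w m ≤ ∑ i ∈ Finset.range m, eigDesc (sqrtRank1 w - Z) i := by
  apply csInf_le
  · refine ⟨0, ?_⟩
    rintro r ⟨Y, hYsymm, hYsupp, rfl⟩
    have hBsymm : (sqrtRank1 w + Y).IsSymm := Matrix.IsSymm.add (sqrtRank1_symm w) hYsymm
    have hB := symm_herm hBsymm
    have hdiag : ∀ i, (sqrtRank1 w + Y) i i = w i := by
      intro i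
      have hY : Y i i = 0 := hYsupp i i (G.irrefl)
      simp [Matrix.add_apply, sqrtRank1, hY, Real.mul_self_sqrt (hw i)]
    have htr : (sqrtRank1 w + Y).trace = ∑ i, w i := by
      rw [Matrix.trace]
      exact Finset.sum_congr rfl fun i _ => hdiag i
    exact sum_eigDesc_nonneg hB hmn (by rw [htr]; exact Finset.sum_nonneg fun i _ => hw i)
  · refine ⟨-Z, ?_, ?_, ?_⟩
    · show (-Z)ᵀ = -Z
      rw [Matrix.transpose_neg, hZsymm]
    · intro i j h
      simp [hZsupp i j h]
    · rw [sub_eq_add_neg]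

/-- The second half of the proof of Theorem 2 (Theorem `maxtheta`): if `m = h(G) − 1 ≥ 1`
and `Z` is a symmetric matrix supported on the edges of `G` with a nonnegative top
eigenvector `v` and `λ₁(Z) + Σ_{i=1}^{m−1} λ_{n+1−i}(Z) > 0`, and `√w` is a scalar
multiple of `v` scaled so that `wᵀ𝟙 − λ₁(Z) ≥ −λₙ(Z)`, then
`ϑ_m(G;w) ≤ Σ_{i=1}^m λᵢ(√w√wᵀ − Z) = wᵀ𝟙 − λ₁(Z) − Σ_{i=1}^{m−1} λ_{n+1−i}(Z) < wᵀ𝟙`. -/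
theorem stmt13 {n : ℕ} (G : SimpleGraph (Fin n)) (m : ℕ)
    (hm : m = hParam G - 1) (hm1 : 1 ≤ m) (hmn : m ≤ n)
    (Z : Matrix (Fin n) (Fin n) ℝ) (hZsymm : Z.IsSymm)
    (hZsupp : ∀ i j, ¬ G.Adj i j → Z i j = 0)
    (v : Fin n → ℝ) (hvne : v ≠ 0) (hvnn : ∀ i, 0 ≤ v i)
    (hveig : Z.mulVec v = eigDesc Z 0 • v)
    (hsum : 0 < eigDesc Z 0 + ∑ i ∈ Finset.range (m - 1), eigDesc Z (n - 1 - i))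
    (w : Fin n → ℝ) (hw : ∀ i, 0 ≤ w i)
    (hwv : ∃ c : ℝ, (fun i => Real.sqrt (w i)) = c • v)
    (hscale : -(eigDesc Z (n - 1)) ≤ (∑ i, w i) - eigDesc Z 0) :
    thetaInf G w m ≤ ∑ i ∈ Finset.range m, eigDesc (sqrtRank1 w - Z) i ∧
    (∑ i ∈ Finset.range m, eigDesc (sqrtRank1 w - Z) i) =
      (∑ i, w i) - eigDesc Z 0 - ∑ i ∈ Finset.range (m - 1), eigDesc Z (n - 1 - i) ∧
    (∑ i ∈ Finset.range m, eigDesc (sqrtRank1 w - Z) i) < ∑ i, w i := by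
  have heq : ∑ i ∈ Finset.range m, eigDesc (sqrtRank1 w - Z) i =
      (∑ i, w i) - eigDesc Z 0 - ∑ i ∈ Finset.range (m - 1), eigDesc Z (n - 1 - i) :=
    main_eq m hm1 hmn Z hZsymm v hveig w hw hwv hscale
  refine ⟨theta_le G w hw m hmn Z hZsymm hZsupp, heq, ?_⟩
  rw [heq]
  linarith
end

section
/- Let G be a graph on n vertices. If for an integer k every nonnegative weight vector w ∈ ℝ₊^V satisfies ϑ_k(G;w) ≥ wᵀ𝟙, then h(G) ≤ k, where h(G) is the smallest integer m ≥ 1 such that λ₁(Z) + Σ_{i=1}^{m−1} λ_{n+1−i}(Z) ≤ 0 for all symmetric Z supported on the edges of G. -/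
namespace Stmt15Aux
open Matrix Finset Polynomial
variable {n : ℕ}

lemma eigDesc_eq {A : Matrix (Fin n) (Fin n) ℝ} (hA : A.IsHermitian) {i : ℕ} (hi : i < n) :
    eigDesc A i = hA.eigenvalues (Tuple.sort (fun j => -hA.eigenvalues j) ⟨i, hi⟩) := by
  rw [eigDesc, dif_pos ⟨hi, hA⟩]

/-- multiset equality gives a permutation -/
lemma exists_perm_of_multiset_map_eq {f g : Fin n → ℝ}
    (h : Multiset.map f Finset.univ.val = Multiset.map g Finset.univ.val) :
    ∃ e : Equiv.Perm (Fin n), f = g ∘ e := by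
  have key : ∀ (f : Fin n → ℝ), (↑(List.ofFn (f ∘ ⇑(Tuple.sort f))) : Multiset ℝ)
      = Multiset.map f Finset.univ.val := by
    intro f
    rw [List.ofFn_eq_map]
    have h1 : (↑((List.finRange n).map (f ∘ ⇑(Tuple.sort f))) : Multiset ℝ)
        = Multiset.map (f ∘ ⇑(Tuple.sort f)) (Finset.univ.val) := rfl
    rw [h1, ← Multiset.map_map]
    congr 1
    have := congrArg Finset.val (Finset.map_univ_equiv (Tuple.sort f))
    simpa [Finset.map_val] using this
  have hperm : List.Perm (List.ofFn (f ∘ ⇑(Tuple.sort f))) (List.ofFn (g ∘ ⇑(Tuple.sort g))) := by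
    rw [← Multiset.coe_eq_coe, key f, key g, h]
  have hsortf : List.SortedLE (List.ofFn (f ∘ ⇑(Tuple.sort f))) := by
    rw [List.sortedLE_ofFn_iff]
    exact Tuple.monotone_sort f
  have hsortg : List.SortedLE (List.ofFn (g ∘ ⇑(Tuple.sort g))) := by
    rw [List.sortedLE_ofFn_iff]
    exact Tuple.monotone_sort g
  have heq := List.Perm.eq_of_sortedLE hsortf hsortg hperm
  have heq2 : f ∘ ⇑(Tuple.sort f) = g ∘ ⇑(Tuple.sort g) := List.ofFn_injective heq
  refine ⟨(Tuple.sort f).symm.trans (Tuple.sort g), ?_⟩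
  funext i
  have := congrFun heq2 ((Tuple.sort f).symm i)
  simpa using this

/-- any `Q`-sum is at most any equal-size `P`-sum if `Q` consists of minimal elements -/
lemma sum_le_sum_of_card_eq {f : Fin n → ℝ} {P Q : Finset (Fin n)}
    (hcard : P.card = Q.card) (hQ : ∀ x ∉ Q, ∀ y ∈ Q, f y ≤ f x) :
    ∑ y ∈ Q, f y ≤ ∑ x ∈ P, f x := by
  have h1 : (Q \ P).card = (P \ Q).card := by
    have h2 := Finset.card_sdiff_add_card_inter P Q
    have h3 := Finset.card_sdiff_add_card_inter Q P
    rw [Finset.inter_comm] at h3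
    omega
  have e := Finset.equivOfCardEq h1
  have hstep : ∑ y ∈ Q \ P, f y ≤ ∑ x ∈ P \ Q, f x := by
    have hl : ∑ y ∈ Q \ P, f y = ∑ x : {y // y ∈ Q \ P}, f x.val := (Finset.sum_coe_sort _ _).symm
    rw [hl, ← Equiv.sum_comp e.symm (fun x : {y // y ∈ Q \ P} => f x.val)]
    have hr : ∑ x ∈ P \ Q, f x = ∑ x : {y // y ∈ P \ Q}, f x.val := (Finset.sum_coe_sort _ _).symm
    rw [hr]
    apply Finset.sum_le_sum
    intro x _
    apply hQ
    · exact (Finset.mem_sdiff.mp x.2).2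
    · exact (Finset.mem_sdiff.mp (e.symm x).2).1
  calc ∑ y ∈ Q, f y = ∑ y ∈ Q ∩ P, f y + ∑ y ∈ Q \ P, f y :=
        (Finset.sum_inter_add_sum_sdiff Q P f).symm
    _ ≤ ∑ y ∈ P ∩ Q, f y + ∑ x ∈ P \ Q, f x := by
        rw [Finset.inter_comm]; exact add_le_add_right hstep _
    _ = ∑ x ∈ P, f x := Finset.sum_inter_add_sum_sdiff P Q f

lemma charpoly_conj {V W B : Matrix (Fin n) (Fin n) ℝ} (hVW : V * W = 1) :
    (V * B * W).charpoly = B.charpoly := by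
  have hmap1 : V.map ⇑(C : ℝ →+* ℝ[X]) * W.map ⇑(C : ℝ →+* ℝ[X]) = 1 := by
    rw [← Matrix.map_mul, hVW]
    exact Matrix.map_one _ (map_zero _) (map_one _)
  have hchar : charmatrix (V * B * W)
      = V.map ⇑(C : ℝ →+* ℝ[X]) * charmatrix B * W.map ⇑(C : ℝ →+* ℝ[X]) := by
    rw [charmatrix, charmatrix]
    rw [mul_sub, sub_mul]
    congr 1
    · rw [(Matrix.scalar_commute (X : ℝ[X]) (fun r => (Commute.all _ _)) _).symm.eq]
      rw [mul_assoc, hmap1, mul_one]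
    · simp only [RingHom.mapMatrix_apply]
      rw [← Matrix.map_mul, ← Matrix.map_mul]
  rw [Matrix.charpoly, Matrix.charpoly, hchar, Matrix.det_mul, Matrix.det_mul]
  have hdet : (V.map ⇑(C : ℝ →+* ℝ[X])).det * (W.map ⇑(C : ℝ →+* ℝ[X])).det = 1 := by
    rw [← Matrix.det_mul, hmap1, Matrix.det_one]
  rw [mul_comm ((V.map ⇑(C : ℝ →+* ℝ[X])).det) _, mul_assoc, hdet, mul_one]

lemma charpoly_diag (d : Fin n → ℝ) :
    (Matrix.diagonal d).charpoly
      = (Multiset.map (fun a => X - C a) (Multiset.map d Finset.univ.val)).prod := by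
  have h1 : charmatrix (Matrix.diagonal d) = Matrix.diagonal (fun i => (X : ℝ[X]) - C (d i)) := by
    refine Matrix.ext fun i j => ?_
    by_cases hij : i = j
    · subst hij; simp [charmatrix_apply_eq]
    · rw [charmatrix_apply_ne _ _ _ hij, Matrix.diagonal_apply_ne _ hij,
        Matrix.diagonal_apply_ne _ hij, map_zero, neg_zero]
  rw [Matrix.charpoly, h1, Matrix.det_diagonal, Multiset.map_map]
  rw [Finset.prod_eq_multiset_prod]
  rfl

lemma eig_multiset {A V W : Matrix (Fin n) (Fin n) ℝ} (hA : A.IsHermitian)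
    (d : Fin n → ℝ) (hVW : V * W = 1) (hAeq : A = V * Matrix.diagonal d * W) :
    ∃ e : Equiv.Perm (Fin n), hA.eigenvalues = d ∘ e := by
  have h1 : A.charpoly = (Matrix.diagonal d).charpoly := by
    rw [hAeq]; exact charpoly_conj hVW
  have hU := hA.spectral_theorem
  have hunit : (hA.eigenvectorUnitary : Matrix (Fin n) (Fin n) ℝ)
      * star (hA.eigenvectorUnitary : Matrix (Fin n) (Fin n) ℝ) = 1 :=
    (Matrix.mem_unitaryGroup_iff).mp hA.eigenvectorUnitary.2
  have hof : (RCLike.ofReal ∘ hA.eigenvalues : Fin n → ℝ) = hA.eigenvalues := by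
    funext i; simp [RCLike.ofReal]
  have h2 : A.charpoly = (Matrix.diagonal hA.eigenvalues).charpoly := by
    conv_lhs => rw [hU]
    rw [hof]
    exact charpoly_conj hunit
  have h3 := h2.symm.trans h1
  rw [charpoly_diag, charpoly_diag] at h3
  have h4 := congrArg Polynomial.roots h3
  rw [Polynomial.roots_multiset_prod_X_sub_C, Polynomial.roots_multiset_prod_X_sub_C] at h4
  exact exists_perm_of_multiset_map_eq h4

lemma col_norm {U : Matrix (Fin n) (Fin n) ℝ} (hU : star U * U = 1) (t : Fin n) :
    ∑ i, U i t * U i t = 1 := by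
  have := congrFun (congrFun hU t) t
  rw [Matrix.mul_apply] at this
  simp only [Matrix.star_apply, star_trivial] at this
  rw [Matrix.one_apply_eq] at this
  exact this

lemma spectral_entry {Z : Matrix (Fin n) (Fin n) ℝ} (hZ : Z.IsHermitian) (i j : Fin n) :
    Z i j = ∑ a, hZ.eigenvalues a *
      ((hZ.eigenvectorUnitary : Matrix (Fin n) (Fin n) ℝ) i a
        * (hZ.eigenvectorUnitary : Matrix (Fin n) (Fin n) ℝ) j a) := by
  have hof : (RCLike.ofReal ∘ hZ.eigenvalues : Fin n → ℝ) = hZ.eigenvalues := by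
    funext a; simp [RCLike.ofReal]
  conv_lhs => rw [hZ.spectral_theorem]
  rw [Unitary.conjStarAlgAut_apply, hof, Matrix.mul_apply]
  refine Finset.sum_congr rfl fun a _ => ?_
  rw [Matrix.mul_diagonal, Matrix.star_apply, star_trivial]
  ring

lemma trace_eq_sum_eig {Z : Matrix (Fin n) (Fin n) ℝ} (hZ : Z.IsHermitian) :
    ∑ a, hZ.eigenvalues a = Matrix.trace Z := by
  have hsU : star (hZ.eigenvectorUnitary : Matrix (Fin n) (Fin n) ℝ)
      * (hZ.eigenvectorUnitary : Matrix (Fin n) (Fin n) ℝ) = 1 :=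
    (Matrix.mem_unitaryGroup_iff').mp hZ.eigenvectorUnitary.2
  rw [Matrix.trace]
  calc ∑ a, hZ.eigenvalues a = ∑ a, hZ.eigenvalues a *
        (∑ i, (hZ.eigenvectorUnitary : Matrix (Fin n) (Fin n) ℝ) i a
          * (hZ.eigenvectorUnitary : Matrix (Fin n) (Fin n) ℝ) i a) := by
        refine Finset.sum_congr rfl fun a _ => ?_
        rw [col_norm hsU a, mul_one]
    _ = ∑ i, Z i i := by
        simp_rw [Finset.mul_sum]
        rw [Finset.sum_comm]
        exact Finset.sum_congr rfl fun i _ => (spectral_entry hZ i i).symm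
    _ = Matrix.trace Z := rfl

lemma le_eigDesc_zero {Z : Matrix (Fin n) (Fin n) ℝ} (hZ : Z.IsHermitian) (hn : 0 < n)
    (j : Fin n) : hZ.eigenvalues j ≤ eigDesc Z 0 := by
  rw [eigDesc_eq hZ hn]
  set σ := Tuple.sort (fun j => -hZ.eigenvalues j) with hσ
  have hmono := Tuple.monotone_sort (fun j => -hZ.eigenvalues j)
  have h1 : (⟨0, hn⟩ : Fin n) ≤ σ.symm j := by
    rw [Fin.le_def]; exact Nat.zero_le _
  have h2 := hmono h1
  simp only [Function.comp_apply, ← hσ, Equiv.apply_symm_apply] at h2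
  linarith

lemma sum_eigDesc_eq_sum {Z : Matrix (Fin n) (Fin n) ℝ} (hZ : Z.IsHermitian) :
    ∑ i ∈ Finset.range n, eigDesc Z i = ∑ a, hZ.eigenvalues a := by
  rw [Finset.sum_range fun i => eigDesc Z i]
  have h1 : ∀ i : Fin n, eigDesc Z i.val
      = hZ.eigenvalues (Tuple.sort (fun j => -hZ.eigenvalues j) i) := by
    intro i
    rw [eigDesc_eq hZ i.isLt]
  rw [Finset.sum_congr rfl fun i _ => h1 i]
  exact Equiv.sum_comp (Tuple.sort fun j => -hZ.eigenvalues j) hZ.eigenvalues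

lemma sum_eigDesc_reflect {Z : Matrix (Fin n) (Fin n) ℝ} (hn : 0 < n) :
    eigDesc Z 0 + ∑ i ∈ Finset.range (n - 1), eigDesc Z (n - 1 - i)
      = ∑ i ∈ Finset.range n, eigDesc Z i := by
  have h1 : ∑ i ∈ Finset.range (n - 1), eigDesc Z (n - 1 - i)
      = ∑ i ∈ Finset.range (n - 1), (fun j => eigDesc Z (j + 1)) (n - 1 - 1 - i) := by
    refine Finset.sum_congr rfl fun i hi => ?_
    rw [Finset.mem_range] at hi
    congr 1
    omega
  rw [h1, Finset.sum_range_reflect (fun j => eigDesc Z (j + 1)) (n - 1)]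
  have h2 : Finset.range n = Finset.range ((n - 1) + 1) := by congr 1; omega
  rw [h2, Finset.sum_range_succ']
  ring

lemma main {n : ℕ} (G : SimpleGraph (Fin n)) (k : ℕ) (hk : 1 ≤ k) (hkn : k ≤ n)
    (h : ∀ w : Fin n → ℝ, (∀ i, 0 ≤ w i) → (∑ i, w i) ≤ thetaInf G w k)
    (Z : Matrix (Fin n) (Fin n) ℝ) (hZsymm : Z.IsSymm)
    (hZsupp : ∀ i j, ¬ G.Adj i j → Z i j = 0)
    (hq : 0 < eigDesc Z 0 + ∑ i ∈ Finset.range (k - 1), eigDesc Z (n - 1 - i)) : False := by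
  have hn : 0 < n := lt_of_lt_of_le hk hkn
  have hZH : Z.IsHermitian := by
    rw [Matrix.IsHermitian, Matrix.conjTranspose_eq_transpose_of_trivial]; exact hZsymm
  set μ := hZH.eigenvalues with hμ
  set U := (hZH.eigenvectorUnitary : Matrix (Fin n) (Fin n) ℝ) with hUdef
  set σ := Tuple.sort (fun j => -μ j) with hσ
  set t := σ ⟨0, hn⟩ with ht
  set u : Fin n → ℝ := fun i => U i t with hu
  set ε : Fin n → ℝ := fun i => if u i < 0 then -1 else 1 with hε
  have hε2 : ∀ i, ε i * ε i = 1 := by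
    intro i; rw [hε]; dsimp only; split <;> norm_num
  have hεu : ∀ i, ε i * u i = |u i| := by
    intro i; rw [hε]; dsimp only; split
    · rw [abs_of_neg ‹_›]; ring
    · rw [abs_of_nonneg (not_lt.mp ‹_›)]; ring
  set M := ∑ a, |μ a| with hM
  have hM0 : 0 ≤ M := Finset.sum_nonneg fun a _ => abs_nonneg _
  set c := M + 1 with hc
  have hc0 : 0 < c := by rw [hc]; linarith
  set w : Fin n → ℝ := fun i => c * (u i)^2 with hw
  have hw0 : ∀ i, 0 ≤ w i := fun i => by
    rw [hw]; dsimp only; positivity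
  have hUU : star U * U = 1 := Matrix.mem_unitaryGroup_iff'.mp hZH.eigenvectorUnitary.2
  have hUU2 : U * star U = 1 := Matrix.mem_unitaryGroup_iff.mp hZH.eigenvectorUnitary.2
  have hspec : ∀ i j, Z i j = ∑ a, μ a * (U i a * U j a) := spectral_entry hZH
  have hsumw : ∑ i, w i = c := by
    calc ∑ i, w i = c * ∑ i, u i * u i := by
          rw [Finset.mul_sum]; refine Finset.sum_congr rfl fun i _ => ?_
          rw [hw]; dsimp only; ring
      _ = c := by rw [col_norm hUU t, mul_one]
  set dv : Fin n → ℝ := fun a => (if a = t then c else 0) - μ a with hdv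
  set V : Matrix (Fin n) (Fin n) ℝ := Matrix.of (fun i a => ε i * U i a) with hV
  have hVVt : V * Vᵀ = 1 := by
    refine Matrix.ext fun i j => ?_
    rw [Matrix.mul_apply]
    have h2 := congrFun (congrFun hUU2 i) j
    rw [Matrix.mul_apply] at h2
    simp only [Matrix.star_apply, star_trivial] at h2
    have key : ∑ a, V i a * Vᵀ a j = ε i * ε j * ∑ a, U i a * U j a := by
      rw [Finset.mul_sum]
      refine Finset.sum_congr rfl fun a _ => ?_
      rw [Matrix.transpose_apply]
      show (ε i * U i a) * (ε j * U j a) = _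
      ring
    rw [key, h2]
    by_cases hij : i = j
    · subst hij; rw [Matrix.one_apply_eq, hε2 i, one_mul]
    · rw [Matrix.one_apply_ne hij, mul_zero]
  have hVtV : Vᵀ * V = 1 := mul_eq_one_comm.mp hVVt
  set Y : Matrix (Fin n) (Fin n) ℝ := Matrix.of (fun i j => -(ε i * Z i j * ε j)) with hY
  have hYsymm : Y.IsSymm := by
    refine Matrix.ext fun i j => ?_
    rw [Matrix.transpose_apply]
    show -(ε j * Z j i * ε i) = -(ε i * Z i j * ε j)
    rw [hZsymm.apply i j]
    ring
  have hYsupp : ∀ i j, ¬ G.Adj i j → Y i j = 0 := by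
    intro i j hij
    show -(ε i * Z i j * ε j) = 0
    rw [hZsupp i j hij]; ring
  set A := sqrtRank1 w + Y with hA
  have hsq : ∀ i j, sqrtRank1 w i j = c * ((ε i * u i) * (ε j * u j)) := by
    intro i j
    show Real.sqrt (w i) * Real.sqrt (w j) = _
    have hs : ∀ i, Real.sqrt (w i) = Real.sqrt c * |u i| := by
      intro i
      rw [show w i = c * (u i)^2 from rfl, Real.sqrt_mul hc0.le, Real.sqrt_sq_eq_abs]
    rw [hs, hs, hεu, hεu, show Real.sqrt c * |u i| * (Real.sqrt c * |u j|)
      = (Real.sqrt c * Real.sqrt c) * (|u i| * |u j|) from by ring, Real.mul_self_sqrt hc0.le]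
  have hAeq : A = V * Matrix.diagonal dv * Vᵀ := by
    refine Matrix.ext fun i j => ?_
    have hrhs : (V * Matrix.diagonal dv * Vᵀ) i j = ∑ a, V i a * dv a * V j a := by
      rw [Matrix.mul_apply]
      refine Finset.sum_congr rfl fun a _ => ?_
      rw [Matrix.mul_diagonal, Matrix.transpose_apply]
    rw [hrhs]
    have hsplit : ∑ a, V i a * dv a * V j a
        = ε i * ε j * (c * (U i t * U j t)) - ε i * ε j * Z i j := by
      have e1 : ∀ a, V i a * dv a * V j a
          = ε i * ε j * (U i a * (if a = t then c else 0) * U j a)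
            - ε i * ε j * (μ a * (U i a * U j a)) := by
        intro a
        show (ε i * U i a) * ((if a = t then c else 0) - μ a) * (ε j * U j a) = _
        ring
      rw [Finset.sum_congr rfl fun a _ => e1 a, Finset.sum_sub_distrib,
        ← Finset.mul_sum, ← Finset.mul_sum, ← hspec i j]
      congr 2
      rw [Finset.sum_eq_single_of_mem t (Finset.mem_univ t)]
      · rw [if_pos rfl]; ring
      · intro b _ hbt
        rw [if_neg hbt]; ring
    rw [hsplit]
    show sqrtRank1 w i j + (-(ε i * Z i j * ε j)) = _
    rw [hsq i j]
    ring
  have hAH : A.IsHermitian := by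
    rw [Matrix.IsHermitian, Matrix.conjTranspose_eq_transpose_of_trivial, hAeq]
    rw [Matrix.transpose_mul, Matrix.transpose_mul, Matrix.transpose_transpose,
      Matrix.diagonal_transpose, ← Matrix.mul_assoc]
  obtain ⟨e, he⟩ := eig_multiset hAH dv hVVt hAeq
  set σA := Tuple.sort (fun j => -hAH.eigenvalues j) with hσA
  set S0 : Finset (Fin n) := Finset.map (Fin.castLEEmb hkn) Finset.univ with hS0
  have hS0card : S0.card = k := by
    rw [hS0, Finset.card_map, Finset.card_univ, Fintype.card_fin]
  have hsum0 : ∑ i ∈ Finset.range k, eigDesc A i = ∑ x ∈ S0, hAH.eigenvalues (σA x) := by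
    rw [Finset.sum_range fun i => eigDesc A i, hS0, Finset.sum_map]
    refine Finset.sum_congr rfl fun i _ => ?_
    rw [eigDesc_eq hAH (lt_of_lt_of_le i.isLt hkn)]
    congr 1
  set S1 := S0.image σA with hS1
  have hS1card : S1.card = k := by
    rw [hS1, Finset.card_image_of_injective _ σA.injective, hS0card]
  have hsum1 : ∑ x ∈ S0, hAH.eigenvalues (σA x) = ∑ y ∈ S1, hAH.eigenvalues y :=
    (Finset.sum_image fun x _ y _ hxy => σA.injective hxy).symm
  set T := S1.image e with hT
  have hTcard : T.card = k := by
    rw [hT, Finset.card_image_of_injective _ e.injective, hS1card]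
  have hsum2 : ∑ y ∈ S1, hAH.eigenvalues y = ∑ z ∈ T, dv z := by
    rw [hT, Finset.sum_image fun x _ y _ hxy => e.injective hxy]
    refine Finset.sum_congr rfl fun y _ => ?_
    rw [he]; rfl
  have hsum3 : ∑ z ∈ T, dv z = (if t ∈ T then c else 0) - ∑ z ∈ T, μ z := by
    have : ∀ z, dv z = (if z = t then c else 0) - μ z := fun z => rfl
    rw [Finset.sum_congr rfl fun z _ => this z, Finset.sum_sub_distrib]
    congr 1
    exact Finset.sum_ite_eq' T t (fun _ => c)
  have hbound : ∑ z ∈ T, dv z < c := by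
    by_cases htT : t ∈ T
    · have hTt : (T.erase t).card = k - 1 := by rw [Finset.card_erase_of_mem htT, hTcard]
      have hlt : ∀ i : ℕ, n - 1 - i < n := fun i => by omega
      set φ : ℕ → Fin n := fun i => σ ⟨n - 1 - i, hlt i⟩ with hφ
      set B := (Finset.range (k - 1)).image φ with hB
      have hφinj : ∀ x ∈ Finset.range (k - 1), ∀ y ∈ Finset.range (k - 1), φ x = φ y → x = y := by
        intro x hx y hy hxy
        rw [Finset.mem_range] at hx hy
        have h5 := σ.injective hxy
        have h6 : n - 1 - x = n - 1 - y := Fin.mk.inj_iff.mp h5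
        omega
      have hBcard : B.card = k - 1 := by
        rw [hB, Finset.card_image_of_injOn hφinj, Finset.card_range]
      have hBsum : ∑ z ∈ B, μ z = ∑ i ∈ Finset.range (k - 1), eigDesc Z (n - 1 - i) := by
        rw [hB, Finset.sum_image hφinj]
        refine Finset.sum_congr rfl fun i hi => ?_
        rw [eigDesc_eq hZH (hlt i)]
      have hmin : ∀ x ∉ B, ∀ y ∈ B, μ y ≤ μ x := by
        intro x hx y hy
        rw [hB, Finset.mem_image] at hy
        obtain ⟨i, hi, rfl⟩ := hy
        rw [Finset.mem_range] at hi
        have hxval : (σ.symm x).val < n - (k - 1) := by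
          by_contra hge
          push_neg at hge
          apply hx
          rw [hB, Finset.mem_image]
          refine ⟨n - 1 - (σ.symm x).val, ?_, ?_⟩
          · rw [Finset.mem_range]
            have := (σ.symm x).isLt
            omega
          · rw [hφ]
            dsimp only
            have hre : (⟨n - 1 - (n - 1 - (σ.symm x).val), hlt _⟩ : Fin n) = σ.symm x := by
              apply Fin.ext
              dsimp
              have := (σ.symm x).isLt
              omega
            rw [hre, Equiv.apply_symm_apply]
        have hle : (σ.symm x) ≤ (⟨n - 1 - i, hlt i⟩ : Fin n) := by
          rw [Fin.le_def]
          dsimp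
          omega
        have hmono := Tuple.monotone_sort (fun j => -μ j) hle
        simp only [Function.comp_apply, ← hσ, Equiv.apply_symm_apply] at hmono
        linarith
      have hL4 := sum_le_sum_of_card_eq (P := T.erase t) (Q := B)
        (by rw [hTt, hBcard]) hmin
      have hsplitT : ∑ z ∈ T, μ z = μ t + ∑ z ∈ T.erase t, μ z :=
        (Finset.add_sum_erase T μ htT).symm
      have ht0 : eigDesc Z 0 = μ t := eigDesc_eq hZH hn
      rw [hsum3, if_pos htT]
      rw [ht0, ← hBsum] at hq
      linarith
    · rw [hsum3, if_neg htT]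
      have h1 : -∑ z ∈ T, μ z ≤ ∑ z ∈ T, |μ z| := by
        rw [← Finset.sum_neg_distrib]
        exact Finset.sum_le_sum fun z _ => neg_le_abs _
      have h2 : ∑ z ∈ T, |μ z| ≤ M := by
        rw [hM]
        exact Finset.sum_le_sum_of_subset_of_nonneg (Finset.subset_univ T)
          (fun z _ _ => abs_nonneg _)
      rw [hc]
      linarith
  have hfin := h w hw0
  rw [hsumw, thetaInf] at hfin
  have hrmem : (∑ i ∈ Finset.range k, eigDesc A i) ∈
      {r : ℝ | ∃ Y' : Matrix (Fin n) (Fin n) ℝ, Y'.IsSymm ∧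
        (∀ i j, ¬ G.Adj i j → Y' i j = 0) ∧
        r = ∑ i ∈ Finset.range k, eigDesc (sqrtRank1 w + Y') i} :=
    ⟨Y, hYsymm, hYsupp, rfl⟩
  have hval : ∑ i ∈ Finset.range k, eigDesc A i = ∑ z ∈ T, dv z := by
    rw [hsum0, hsum1, hsum2]
  by_cases hbdd : BddBelow {r : ℝ | ∃ Y' : Matrix (Fin n) (Fin n) ℝ, Y'.IsSymm ∧
        (∀ i j, ¬ G.Adj i j → Y' i j = 0) ∧
        r = ∑ i ∈ Finset.range k, eigDesc (sqrtRank1 w + Y') i}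
  · have hle := csInf_le hbdd hrmem
    rw [hval] at hle
    linarith
  · rw [Real.sInf_of_not_bddBelow hbdd] at hfin
    linarith

end Stmt15Aux

/-- Inequality (3) of Theorem `maxtheta`: if every nonnegative weight vector `w`
satisfies `ϑ_k(G; w) ≥ wᵀ𝟙`, then `h(G) ≤ k`. -/
theorem stmt15 {n : ℕ} (G : SimpleGraph (Fin n)) (k : ℕ) (hk : 1 ≤ k)
    (h : ∀ w : Fin n → ℝ, (∀ i, 0 ≤ w i) → (∑ i, w i) ≤ thetaInf G w k) :
    hParam G ≤ k := by
  by_cases hkn : k ≤ n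
  · refine Nat.sInf_le ⟨hk, ?_⟩
    intro Z hZsymm hZsupp
    by_contra hq
    push_neg at hq
    exact Stmt15Aux.main G k hk hkn h Z hZsymm hZsupp hq
  · push_neg at hkn
    rcases Nat.eq_zero_or_pos n with hn | hn
    · refine le_trans (Nat.sInf_le ⟨le_refl 1, ?_⟩) hk
      intro Z _ _
      subst hn
      simp [eigDesc]
    · refine le_trans (Nat.sInf_le ⟨hn, ?_⟩) hkn.le
      intro Z hZsymm hZsupp
      have hZH : Z.IsHermitian := by
        rw [Matrix.IsHermitian, Matrix.conjTranspose_eq_transpose_of_trivial]; exact hZsymm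
      have htr : Matrix.trace Z = 0 := by
        rw [Matrix.trace]
        refine Finset.sum_eq_zero fun i _ => hZsupp i i (G.irrefl)
      refine le_of_eq ?_
      rw [Stmt15Aux.sum_eigDesc_reflect hn, Stmt15Aux.sum_eigDesc_eq_sum hZH,
        Stmt15Aux.trace_eq_sum_eig hZH, htr]
end
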